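/- arXiv:1704.00152 — 2 statements merged into one kernel-verified Lean document; each statement's English description precedes it below -/
import Mathlib

section
/- Let G = G_1 ∘ G_2 where G_i has a leaf f_i with neighbour v_i of degree at least 3 in G_i, obtained by deleting f_1, f_2 and identifying v_1 with v_2 into a vertex v. Suppose that for i = 1, 2 there exists u_i ∈ N_{G_i}(v) with deg_{G_i}(u_i) = 2. Then the cut sets of G are exactly the sets S_1 ∪ S_2 where S_i is a cut set of G_i (i = 1,2) and either v ∉ S_1 ∪ S_2, or S_1 ∩ S_2 = {v}. -/
open SimpleGraph Finset

/-- Number of connected components of the subgraph of `G` induced on the complement of `S`. -/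
noncomputable def numComp {V : Type*} [Fintype V] (G : SimpleGraph V) (S : Finset V) : ℕ :=
  Nat.card (G.induce ((↑S : Set V)ᶜ)).ConnectedComponent

/-- `S` is a cut set of `G`. -/
def IsCutSet {V : Type*} [Fintype V] [DecidableEq V] (G : SimpleGraph V) (S : Finset V) : Prop :=
  S = ∅ ∨ (S ≠ ∅ ∧ ∀ i ∈ S, numComp G (S.erase i) < numComp G S)

/-- The combinatorial condition equivalent to unmixedness of the binomial edge ideal. -/
def Unmixed {V : Type*} [Fintype V] [DecidableEq V] (G : SimpleGraph V) : Prop :=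
  ∀ S : Finset V, IsCutSet G S → numComp G S = S.card + 1

/-- Vertex set of `(G₁,f₁) ∘ (G₂,f₂)`: the leaves `f₁, f₂` are removed and `v₁` is
identified with `v₂` (the copy of `v₂` is dropped, `v₁` playing the role of `v`). -/
abbrev GlueV {V₁ V₂ : Type*} (f1 : V₁) (f2 v2 : V₂) : Type _ :=
  {x : V₁ // x ≠ f1} ⊕ {x : V₂ // x ≠ f2 ∧ x ≠ v2}

/-- The graph `(G₁,f₁) ∘ (G₂,f₂)`. -/
def glueGraph {V₁ V₂ : Type*} (Γ1 : SimpleGraph V₁) (Γ2 : SimpleGraph V₂)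
    (f1 v1 : V₁) (f2 v2 : V₂) : SimpleGraph (GlueV f1 f2 v2) :=
  SimpleGraph.fromRel (fun x y =>
    match x, y with
    | Sum.inl a, Sum.inl b => Γ1.Adj a.1 b.1
    | Sum.inr a, Sum.inr b => Γ2.Adj a.1 b.1
    | Sum.inl a, Sum.inr b => a.1 = v1 ∧ Γ2.Adj v2 b.1
    | Sum.inr a, Sum.inl b => b.1 = v1 ∧ Γ2.Adj v2 a.1)

/-- The subset of `V₁` corresponding to a set of vertices of the glued graph
(`S ∩ V(G₁)`, with `v` read as `v₁`). -/
def leftPart {V₁ V₂ : Type*} [DecidableEq V₁] {f1 : V₁} {f2 v2 : V₂}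
    (S : Finset (GlueV f1 f2 v2)) : Finset V₁ :=
  S.biUnion (fun z => match z with
    | Sum.inl a => {a.1}
    | Sum.inr _ => (∅ : Finset V₁))

/-- The subset of `V₂` corresponding to a set of vertices of the glued graph
(`S ∩ V(G₂)`, with `v` read as `v₂`). -/
def rightPart {V₁ V₂ : Type*} [DecidableEq V₁] [DecidableEq V₂] (v1 : V₁) {f1 : V₁}
    {f2 v2 : V₂} (S : Finset (GlueV f1 f2 v2)) : Finset V₂ :=
  S.biUnion (fun z => match z with
    | Sum.inl a => if a.1 = v1 then {v2} else (∅ : Finset V₂)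
    | Sum.inr b => {b.1})

/-- The subset of the glued graph corresponding to a subset `S1 ⊆ V₁`. -/
def liftLeft {V₁ V₂ : Type*} [DecidableEq V₁] [DecidableEq V₂] {f1 : V₁} {f2 v2 : V₂}
    (S1 : Finset V₁) : Finset (GlueV f1 f2 v2) :=
  S1.biUnion (fun a => if h : a ≠ f1 then {Sum.inl ⟨a, h⟩} else ∅)

/-- The subset of the glued graph corresponding to a subset `S2 ⊆ V₂`
(`v₂` being read as `v`, i.e. as `v₁`). -/
def liftRight {V₁ V₂ : Type*} [DecidableEq V₁] [DecidableEq V₂] {f1 v1 : V₁} {f2 v2 : V₂}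
    (hne1 : v1 ≠ f1) (S2 : Finset V₂) : Finset (GlueV f1 f2 v2) :=
  S2.biUnion (fun b =>
    if h : b ≠ f2 ∧ b ≠ v2 then {Sum.inr ⟨b, h⟩}
    else if b = v2 then {Sum.inl ⟨v1, hne1⟩} else ∅)

section Aux

variable {W : Type*} [Fintype W] [DecidableEq W]

theorem numComp_erase_lt_iff (H : SimpleGraph W) (S : Finset W) (i : W) (hi : i ∈ S) :
    numComp H (S.erase i) < numComp H S ↔
      ∃ (x y : W) (hx : x ∈ ((↑S : Set W)ᶜ : Set W)) (hy : y ∈ ((↑S : Set W)ᶜ : Set W)),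
        H.Adj i x ∧ H.Adj i y ∧
        ¬ (H.induce ((↑S : Set W)ᶜ)).Reachable ⟨x, hx⟩ ⟨y, hy⟩ := by
  classical
  set A : Set W := (↑S : Set W)ᶜ with hA
  set A' : Set W := (↑(S.erase i) : Set W)ᶜ with hA'
  have hsub : A ⊆ A' := by
    intro x hx
    simp only [hA, hA', Set.mem_compl_iff, Finset.coe_erase, Set.mem_diff] at *
    tauto
  have hmemA' : ∀ z : W, z ∈ A' ↔ z ∈ A ∨ z = i := by
    intro z
    simp only [hA, hA', Set.mem_compl_iff, Finset.mem_coe, Finset.mem_erase]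
    by_cases hz : z = i <;> simp [hz, hi]
  have hiA' : i ∈ A' := by rw [hmemA']; right; rfl
  have hiA : i ∉ A := by simp [hA, hi]
  let ι : H.induce A →g H.induce A' := ⟨fun x => ⟨x.1, hsub x.2⟩, fun {a b} h => by
    simp only [comap_adj, Function.Embedding.coe_subtype] at *; exact h⟩
  let ψ : (H.induce A).ConnectedComponent → (H.induce A').ConnectedComponent :=
    ConnectedComponent.map ι
  -- RHS abbreviation
  set RHS : Prop := ∃ (x y : W) (hx : x ∈ A) (hy : y ∈ A),
        H.Adj i x ∧ H.Adj i y ∧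
        ¬ (H.induce A).Reachable ⟨x, hx⟩ ⟨y, hy⟩ with hRHS
  -- walk decomposition claim
  have C3 : ∀ (p q : A') (w : (H.induce A').Walk p q),
      ((p : W) ≠ i → (q : W) ≠ i →
        (∃ (hp : (p:W) ∈ A) (hq : (q:W) ∈ A),
          (H.induce A).Reachable ⟨p, hp⟩ ⟨q, hq⟩) ∨ RHS) ∧
      ((p : W) = i → (q : W) ≠ i →
        (∃ (x : W) (hx : x ∈ A) (hq : (q:W) ∈ A),
          H.Adj i x ∧ (H.induce A).Reachable ⟨x, hx⟩ ⟨q, hq⟩) ∨ RHS) := by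
    intro p q w
    induction w with
    | @nil u =>
      refine ⟨fun hp _ => ?_, fun hp hq => absurd hp hq⟩
      have hA0 : (u : W) ∈ A := ((hmemA' u).1 u.2).resolve_right hp
      exact Or.inl ⟨hA0, hA0, Reachable.refl _⟩
    | @cons a b c hab w ih =>
      have hadj : H.Adj (a : W) (b : W) := by
        simpa using hab
      constructor
      · intro hai hci
        by_cases hbi : (b : W) = i
        · -- a ≠ i, b = i
          rcases (ih.2 hbi hci) with ⟨x, hx, hq, hadjix, hreach⟩ | hr
          · have haA : (a : W) ∈ A := ((hmemA' a).1 a.2).resolve_right hai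
            by_cases hre : (H.induce A).Reachable ⟨a, haA⟩ ⟨x, hx⟩
            · exact Or.inl ⟨haA, hq, hre.trans hreach⟩
            · refine Or.inr ⟨a, x, haA, hx, ?_, hadjix, hre⟩
              rw [hbi] at hadj; exact hadj.symm
          · exact Or.inr hr
        · -- a ≠ i, b ≠ i
          rcases (ih.1 hbi hci) with ⟨hb, hq, hreach⟩ | hr
          · have haA : (a : W) ∈ A := ((hmemA' a).1 a.2).resolve_right hai
            have : (H.induce A).Adj ⟨a, haA⟩ ⟨b, hb⟩ := by
              simp only [comap_adj, Function.Embedding.coe_subtype]; exact hadj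
            exact Or.inl ⟨haA, hq, (this.reachable).trans hreach⟩
          · exact Or.inr hr
      · intro hai hci
        have hbi : (b : W) ≠ i := by
          intro hb
          have : H.Adj i i := by rw [hai] at hadj; rw [hb] at hadj; exact hadj
          exact H.irrefl this
        rcases (ih.1 hbi hci) with ⟨hb, hq, hreach⟩ | hr
        · refine Or.inl ⟨b, hb, hq, ?_, hreach⟩
          rw [hai] at hadj; exact hadj
        · exact Or.inr hr
  constructor
  · -- numComp decrease implies RHS
    intro hlt
    by_contra hnr
    -- then ψ is injective
    have hinj : Function.Injective ψ := by
      intro C D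
      refine ConnectedComponent.ind₂ (fun x y => ?_) C D
      intro hψ
      have hre : (H.induce A').Reachable (ι x) (ι y) :=
        (ConnectedComponent.exact (by simpa [ψ, ConnectedComponent.map_mk] using hψ))
      obtain ⟨w⟩ := hre
      have hx : ((ι x : A') : W) ≠ i := fun h => hiA (h ▸ x.2)
      have hy : ((ι y : A') : W) ≠ i := fun h => hiA (h ▸ y.2)
      rcases (C3 _ _ w).1 hx hy with ⟨hp, hq, hreach⟩ | hr
      · apply ConnectedComponent.sound
        have ex : (⟨(ι x : A'), hp⟩ : A) = x := Subtype.ext rfl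
        have ey : (⟨(ι y : A'), hq⟩ : A) = y := Subtype.ext rfl
        rwa [ex, ey] at hreach
      · exact absurd hr hnr
    have hle := Nat.card_le_card_of_injective ψ hinj
    have hlt' : Nat.card (H.induce A').ConnectedComponent
        < Nat.card (H.induce A).ConnectedComponent := by
      simpa [numComp, hA, hA'] using hlt
    omega
  · -- RHS implies decrease
    rintro ⟨x, y, hx, hy, hadjx, hadjy, hnreach⟩
    have hxA' : x ∈ A' := hsub hx
    have hyA' : y ∈ A' := hsub hy
    have hadjx' : (H.induce A').Adj ⟨i, hiA'⟩ ⟨x, hxA'⟩ := by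
      simp only [comap_adj, Function.Embedding.coe_subtype]; exact hadjx
    have hadjy' : (H.induce A').Adj ⟨i, hiA'⟩ ⟨y, hyA'⟩ := by
      simp only [comap_adj, Function.Embedding.coe_subtype]; exact hadjy
    have hψeq : ψ ((H.induce A).connectedComponentMk ⟨x, hx⟩) = ψ ((H.induce A).connectedComponentMk ⟨y, hy⟩) := by
      simp only [ψ, ConnectedComponent.map_mk]
      apply ConnectedComponent.sound
      exact (hadjx'.symm.reachable).trans hadjy'.reachable
    have hne : ((H.induce A).connectedComponentMk ⟨x, hx⟩ : (H.induce A).ConnectedComponent)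
        ≠ (H.induce A).connectedComponentMk ⟨y, hy⟩ := fun h => hnreach (ConnectedComponent.exact h)
    have hsurj : Function.Surjective ψ := by
      intro C
      refine ConnectedComponent.ind (fun z => ?_) C
      by_cases hz : (z : W) = i
      · refine ⟨(H.induce A).connectedComponentMk ⟨x, hx⟩, ?_⟩
        simp only [ψ, ConnectedComponent.map_mk]
        apply ConnectedComponent.sound
        have : (ι ⟨x, hx⟩ : A') = ⟨x, hxA'⟩ := rfl
        rw [this]
        have hzi : z = ⟨i, hiA'⟩ := Subtype.ext hz
        rw [hzi]
        exact hadjx'.symm.reachable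
      · have hzA : (z : W) ∈ A := ((hmemA' z).1 z.2).resolve_right hz
        refine ⟨(H.induce A).connectedComponentMk ⟨z, hzA⟩, ?_⟩
        simp only [ψ, ConnectedComponent.map_mk]
        rfl
    have hninj : ¬ Function.Injective ψ := fun h => hne (h hψeq)
    haveI : Fintype (H.induce A).ConnectedComponent := Fintype.ofFinite _
    haveI : Fintype (H.induce A').ConnectedComponent := Fintype.ofFinite _
    simp only [numComp, Nat.card_eq_fintype_card]
    exact Fintype.card_lt_of_surjective_not_injective ψ hsurj hninj

set_option linter.unusedSectionVars false
section Leaf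

variable {V : Type*} [Fintype V] [DecidableEq V] (Γ : SimpleGraph V) [DecidableRel Γ.Adj]
variable {f v : V}

lemma leaf_nbr (hl : Γ.degree f = 1) (ha : Γ.Adj f v) {x : V} (hx : Γ.Adj f x) : x = v := by
  have h1 : v ∈ Γ.neighborFinset f := by rwa [mem_neighborFinset]
  have h2 : x ∈ Γ.neighborFinset f := by rwa [mem_neighborFinset]
  have hc : (Γ.neighborFinset f).card ≤ 1 := le_of_eq hl
  exact Finset.card_le_one.mp hc x h2 v h1

lemma deg2_nbr {u x y : V} (hd : Γ.degree u = 2) (hv : Γ.Adj u v) (hx : Γ.Adj u x)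
    (hy : Γ.Adj u y) (hxv : x ≠ v) (hyv : y ≠ v) : x = y := by
  have hsub : ({v, x} : Finset V) ⊆ Γ.neighborFinset u := by
    intro z hz
    rw [Finset.mem_insert, Finset.mem_singleton] at hz
    rcases hz with rfl | rfl <;> rw [mem_neighborFinset] <;> assumption
  have hcard : ({v, x} : Finset V).card = 2 := by
    rw [Finset.card_insert_of_notMem (by simp [Ne.symm hxv]), Finset.card_singleton]
  have heq : ({v, x} : Finset V) = Γ.neighborFinset u :=
    Finset.eq_of_subset_of_card_le hsub (by rw [hcard]; exact le_of_eq hd)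
  have hy2 : y ∈ ({v, x} : Finset V) := by rw [heq, mem_neighborFinset]; exact hy
  rw [Finset.mem_insert, Finset.mem_singleton] at hy2
  rcases hy2 with rfl | rfl
  · exact absurd rfl hyv
  · rfl

/-- Reachability among non-leaf vertices is unaffected by also deleting the leaf. -/
lemma reach_of_reach_erase_leaf (hl : Γ.degree f = 1) (ha : Γ.Adj f v) (S : Finset V)
    {x y : V} (hx : x ∈ ((↑S : Set V))ᶜ) (hy : y ∈ ((↑S : Set V))ᶜ)
    (hxf : x ≠ f) (hyf : y ≠ f)
    (hx' : x ∈ ((↑(insert f S) : Set V))ᶜ) (hy' : y ∈ ((↑(insert f S) : Set V))ᶜ)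
    (hr : (Γ.induce ((↑S : Set V))ᶜ).Reachable ⟨x, hx⟩ ⟨y, hy⟩) :
    (Γ.induce ((↑(insert f S) : Set V))ᶜ).Reachable ⟨x, hx'⟩ ⟨y, hy'⟩ := by
  obtain ⟨w⟩ := hr
  have C : ∀ (p q : (((↑S : Set V))ᶜ : Set V)) (w : (Γ.induce ((↑S : Set V))ᶜ).Walk p q),
      ((p : V) ≠ f → (q : V) ≠ f → ∃ (hp : (p:V) ∈ ((↑(insert f S) : Set V))ᶜ)
        (hq : (q:V) ∈ ((↑(insert f S) : Set V))ᶜ),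
        (Γ.induce ((↑(insert f S) : Set V))ᶜ).Reachable ⟨p, hp⟩ ⟨q, hq⟩) ∧
      ((p : V) = f → (q : V) ≠ f → ∃ (hv : v ∈ ((↑(insert f S) : Set V))ᶜ)
        (hq : (q:V) ∈ ((↑(insert f S) : Set V))ᶜ),
        (Γ.induce ((↑(insert f S) : Set V))ᶜ).Reachable ⟨v, hv⟩ ⟨q, hq⟩) := by
    intro p q w
    induction w with
    | @nil u =>
      refine ⟨fun hp hq => ?_, fun hp hq => absurd hp hq⟩
      have hu : (u : V) ∈ ((↑(insert f S) : Set V))ᶜ := by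
        have := u.2; simp only [Set.mem_compl_iff, Finset.mem_coe, Finset.mem_insert] at *
        tauto
      exact ⟨hu, hu, Reachable.refl _⟩
    | @cons a b c hab w ih =>
      have hadj : Γ.Adj (a : V) (b : V) := by simpa using hab
      constructor
      · intro haf hcf
        have haI : (a : V) ∈ ((↑(insert f S) : Set V))ᶜ := by
          have := a.2; simp only [Set.mem_compl_iff, Finset.mem_coe, Finset.mem_insert] at *
          tauto
        by_cases hbf : (b : V) = f
        · -- next vertex is the leaf; then a = v
          have hav : (a : V) = v := leaf_nbr Γ hl ha (by rw [← hbf]; exact hadj.symm)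
          rcases ih.2 hbf hcf with ⟨hv', hq, hreach⟩
          refine ⟨haI, hq, ?_⟩
          have : (⟨(a:V), haI⟩ : (((↑(insert f S) : Set V))ᶜ : Set V)) = ⟨v, hv'⟩ := Subtype.ext hav
          rw [this]; exact hreach
        · rcases ih.1 hbf hcf with ⟨hb, hq, hreach⟩
          refine ⟨haI, hq, ?_⟩
          have hadj' : (Γ.induce ((↑(insert f S) : Set V))ᶜ).Adj ⟨a, haI⟩ ⟨b, hb⟩ := by
            simp only [comap_adj, Function.Embedding.coe_subtype]; exact hadj
          exact hadj'.reachable.trans hreach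
      · intro haf hcf
        have hbv : (b : V) = v := leaf_nbr Γ hl ha (by rw [← haf]; exact hadj)
        have hbf : (b : V) ≠ f := by
          rw [hbv]; intro h; rw [h] at ha; exact Γ.irrefl ha
        rcases ih.1 hbf hcf with ⟨hb, hq, hreach⟩
        refine ⟨by rwa [← hbv], hq, ?_⟩
        have : (⟨v, by rwa [← hbv]⟩ : (((↑(insert f S) : Set V))ᶜ : Set V)) = ⟨b, hb⟩ :=
          Subtype.ext hbv.symm
        rw [this]; exact hreach
  rcases (C _ _ w).1 hxf hyf with ⟨hp, hq, hreach⟩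
  have e1 : (⟨x, hp⟩ : (((↑(insert f S) : Set V))ᶜ : Set V)) = ⟨x, hx'⟩ := rfl
  exact hreach

/-- The easy converse: deleting fewer vertices preserves reachability. -/
lemma reach_erase_of_reach_insert (S : Finset V)
    {x y : V} (hx : x ∈ ((↑S : Set V))ᶜ) (hy : y ∈ ((↑S : Set V))ᶜ)
    {f : V}
    (hx' : x ∈ ((↑(insert f S) : Set V))ᶜ) (hy' : y ∈ ((↑(insert f S) : Set V))ᶜ)
    (hr : (Γ.induce ((↑(insert f S) : Set V))ᶜ).Reachable ⟨x, hx'⟩ ⟨y, hy'⟩) :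
    (Γ.induce ((↑S : Set V))ᶜ).Reachable ⟨x, hx⟩ ⟨y, hy⟩ := by
  have hsub : ((↑(insert f S) : Set V))ᶜ ⊆ ((↑S : Set V))ᶜ := by
    intro z hz
    simp only [Set.mem_compl_iff, Finset.mem_coe, Finset.mem_insert] at *
    tauto
  let ι : Γ.induce ((↑(insert f S) : Set V))ᶜ →g Γ.induce ((↑S : Set V))ᶜ :=
    ⟨fun z => ⟨z.1, hsub z.2⟩, fun {a b} h => by
      simp only [comap_adj, Function.Embedding.coe_subtype] at *; exact h⟩
  exact hr.map ι

/-- If `v ∈ S` then the leaf `f` is isolated in the complement of `S`. -/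
lemma leaf_isolated (hl : Γ.degree f = 1) (ha : Γ.Adj f v) (S : Finset V) (hvS : v ∈ S)
    {x : V} (hx : x ∈ ((↑S : Set V))ᶜ) (hf : f ∈ ((↑S : Set V))ᶜ) (hxf : x ≠ f) :
    ¬ (Γ.induce ((↑S : Set V))ᶜ).Reachable ⟨x, hx⟩ ⟨f, hf⟩ := by
  intro hr
  have key : ∀ (p q : (((↑S : Set V))ᶜ : Set V)) (w : (Γ.induce ((↑S : Set V))ᶜ).Walk p q),
      (p : V) = f → (q : V) = f := by
    intro p q w
    induction w with
    | nil => exact fun h => h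
    | @cons a b c hab w ih =>
      intro hp
      exfalso
      have hadj : Γ.Adj (a : V) (b : V) := by simpa using hab
      have hbv : (b : V) = v := leaf_nbr Γ hl ha (by rw [← hp]; exact hadj)
      have := b.2
      rw [hbv] at this
      exact this hvS
  obtain ⟨w⟩ := hr.symm
  exact hxf (key _ _ w rfl)

end Leaf

section Glue

variable {V₁ V₂ : Type*} [Fintype V₁] [DecidableEq V₁] [Fintype V₂] [DecidableEq V₂]
    {Γ1 : SimpleGraph V₁} {Γ2 : SimpleGraph V₂} {f1 v1 : V₁} {f2 v2 : V₂}

set_option linter.unusedSectionVars false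

lemma glue_adj_inl_inl {a b : {x : V₁ // x ≠ f1}} :
    (glueGraph Γ1 Γ2 f1 v1 f2 v2).Adj (Sum.inl a) (Sum.inl b) ↔ Γ1.Adj a.1 b.1 := by
  unfold glueGraph
  rw [fromRel_adj]
  constructor
  · rintro ⟨-, h | h⟩
    · exact h
    · exact h.symm
  · intro h
    refine ⟨?_, Or.inl h⟩
    intro hh
    injection hh with hh'
    exact Γ1.irrefl (hh' ▸ h)

lemma glue_adj_inr_inr {a b : {x : V₂ // x ≠ f2 ∧ x ≠ v2}} :
    (glueGraph Γ1 Γ2 f1 v1 f2 v2).Adj (Sum.inr a) (Sum.inr b) ↔ Γ2.Adj a.1 b.1 := by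
  unfold glueGraph
  rw [fromRel_adj]
  constructor
  · rintro ⟨-, h | h⟩
    · exact h
    · exact h.symm
  · intro h
    refine ⟨?_, Or.inl h⟩
    intro hh
    injection hh with hh'
    exact Γ2.irrefl (hh' ▸ h)

lemma glue_adj_inl_inr {a : {x : V₁ // x ≠ f1}} {b : {x : V₂ // x ≠ f2 ∧ x ≠ v2}} :
    (glueGraph Γ1 Γ2 f1 v1 f2 v2).Adj (Sum.inl a) (Sum.inr b) ↔ a.1 = v1 ∧ Γ2.Adj v2 b.1 := by
  unfold glueGraph
  rw [fromRel_adj]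
  constructor
  · rintro ⟨-, h | h⟩
    · exact h
    · exact h
  · intro h
    exact ⟨by simp, Or.inl h⟩

lemma glue_adj_inr_inl {a : {x : V₂ // x ≠ f2 ∧ x ≠ v2}} {b : {x : V₁ // x ≠ f1}} :
    (glueGraph Γ1 Γ2 f1 v1 f2 v2).Adj (Sum.inr a) (Sum.inl b) ↔ b.1 = v1 ∧ Γ2.Adj v2 a.1 := by
  unfold glueGraph
  rw [fromRel_adj]
  constructor
  · rintro ⟨-, h | h⟩
    · exact h
    · exact h
  · intro h
    exact ⟨by simp, Or.inl h⟩

lemma mem_leftPart {S : Finset (GlueV f1 f2 v2)} {j : V₁} :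
    j ∈ leftPart S ↔ ∃ h : j ≠ f1, Sum.inl ⟨j, h⟩ ∈ S := by
  unfold leftPart
  rw [Finset.mem_biUnion]
  constructor
  · rintro ⟨z, hz, hj⟩
    cases z with
    | inl a =>
      have hj' : j ∈ ({a.1} : Finset V₁) := hj
      rw [Finset.mem_singleton] at hj'
      subst hj'
      exact ⟨a.2, hz⟩
    | inr b =>
      have hj' : j ∈ (∅ : Finset V₁) := hj
      simp at hj'
  · rintro ⟨h, hS⟩
    exact ⟨_, hS, Finset.mem_singleton_self _⟩

lemma mem_rightPart {S : Finset (GlueV f1 f2 v2)} {j : V₂} :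
    j ∈ rightPart v1 S ↔ (∃ h : j ≠ f2 ∧ j ≠ v2, Sum.inr ⟨j, h⟩ ∈ S) ∨
      (j = v2 ∧ ∃ h : v1 ≠ f1, Sum.inl ⟨v1, h⟩ ∈ S) := by
  unfold rightPart
  rw [Finset.mem_biUnion]
  constructor
  · rintro ⟨z, hz, hj⟩
    cases z with
    | inl a =>
      have hj' : j ∈ (if a.1 = v1 then ({v2} : Finset V₂) else ∅) := hj
      by_cases hv : a.1 = v1
      · rw [if_pos hv, Finset.mem_singleton] at hj'
        refine Or.inr ⟨hj', hv ▸ a.2, ?_⟩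
        have : a = ⟨v1, hv ▸ a.2⟩ := Subtype.ext hv
        rwa [← this]
      · rw [if_neg hv] at hj'; simp at hj'
    | inr b =>
      have hj' : j ∈ ({b.1} : Finset V₂) := hj
      rw [Finset.mem_singleton] at hj'
      subst hj'
      exact Or.inl ⟨b.2, hz⟩
  · rintro (⟨h, hS⟩ | ⟨rfl, h, hS⟩)
    · exact ⟨_, hS, Finset.mem_singleton_self _⟩
    · refine ⟨_, hS, ?_⟩
      show j ∈ (if (⟨v1, h⟩ : {x : V₁ // x ≠ f1}).1 = v1 then ({j} : Finset V₂) else ∅)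
      simp

lemma inl_mem_liftLeft {S1 : Finset V₁} {a : {x : V₁ // x ≠ f1}} :
    (Sum.inl a : GlueV f1 f2 v2) ∈ (liftLeft S1 : Finset (GlueV f1 f2 v2)) ↔ a.1 ∈ S1 := by
  unfold liftLeft
  rw [Finset.mem_biUnion]
  constructor
  · rintro ⟨b, hb, hmem⟩
    by_cases h : b ≠ f1
    · rw [dif_pos h, Finset.mem_singleton] at hmem
      injection hmem with hm
      rw [hm]; exact hb
    · rw [dif_neg h] at hmem; simp at hmem
  · intro h
    exact ⟨a.1, h, by rw [dif_pos a.2, Finset.mem_singleton]⟩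

lemma inr_not_mem_liftLeft {S1 : Finset V₁} {b : {x : V₂ // x ≠ f2 ∧ x ≠ v2}} :
    (Sum.inr b : GlueV f1 f2 v2) ∉ (liftLeft S1 : Finset (GlueV f1 f2 v2)) := by
  unfold liftLeft
  rw [Finset.mem_biUnion]
  rintro ⟨c, hc, hmem⟩
  by_cases h : c ≠ f1
  · rw [dif_pos h, Finset.mem_singleton] at hmem; cases hmem
  · rw [dif_neg h] at hmem; simp at hmem

lemma inr_mem_liftRight {hne1 : v1 ≠ f1} {S2 : Finset V₂} {b : {x : V₂ // x ≠ f2 ∧ x ≠ v2}} :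
    (Sum.inr b : GlueV f1 f2 v2) ∈ liftRight hne1 S2 ↔ b.1 ∈ S2 := by
  unfold liftRight
  rw [Finset.mem_biUnion]
  constructor
  · rintro ⟨c, hc, hmem⟩
    by_cases h : c ≠ f2 ∧ c ≠ v2
    · rw [dif_pos h, Finset.mem_singleton] at hmem
      injection hmem with hm
      rw [hm]; exact hc
    · rw [dif_neg h] at hmem
      by_cases h2 : c = v2
      · rw [if_pos h2, Finset.mem_singleton] at hmem; cases hmem
      · rw [if_neg h2] at hmem; simp at hmem
  · intro h
    exact ⟨b.1, h, by rw [dif_pos b.2, Finset.mem_singleton]⟩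

lemma inl_mem_liftRight {hne1 : v1 ≠ f1} {S2 : Finset V₂} {a : {x : V₁ // x ≠ f1}} :
    (Sum.inl a : GlueV f1 f2 v2) ∈ liftRight hne1 S2 ↔ a.1 = v1 ∧ v2 ∈ S2 := by
  unfold liftRight
  rw [Finset.mem_biUnion]
  constructor
  · rintro ⟨c, hc, hmem⟩
    by_cases h : c ≠ f2 ∧ c ≠ v2
    · rw [dif_pos h, Finset.mem_singleton] at hmem; cases hmem
    · rw [dif_neg h] at hmem
      by_cases h2 : c = v2
      · rw [if_pos h2, Finset.mem_singleton] at hmem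
        injection hmem with hm
        exact ⟨by rw [hm], h2 ▸ hc⟩
      · rw [if_neg h2] at hmem; simp at hmem
  · rintro ⟨hv, hS⟩
    refine ⟨v2, hS, ?_⟩
    rw [dif_neg (by simp), if_pos rfl, Finset.mem_singleton]
    exact congrArg Sum.inl (Subtype.ext hv)



/-- Complement of `S` in the glued vertex set. -/
abbrev glueA {V₁ V₂ : Type*} {f1 : V₁} {f2 v2 : V₂} (S : Finset (GlueV f1 f2 v2)) : Set (GlueV f1 f2 v2) :=
  ((↑S : Set (GlueV f1 f2 v2)))ᶜ

/-- Complement of `S₁ ∪ {f1}` in `V₁`. -/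
abbrev glueA1 {V₁ V₂ : Type*} [DecidableEq V₁] {f2 v2 : V₂} (f1 : V₁) (S : Finset (GlueV f1 f2 v2)) : Set V₁ :=
  ((↑(insert f1 (leftPart S)) : Set V₁))ᶜ

/-- Complement of `S₂ ∪ {f2}` in `V₂`. -/
abbrev glueA2 {V₁ V₂ : Type*} [DecidableEq V₁] [DecidableEq V₂] {f1 : V₁} {f2 v2 : V₂} (v1 : V₁) (S : Finset (GlueV f1 f2 v2)) : Set V₂ :=
  ((↑(insert f2 (rightPart v1 S)) : Set V₂))ᶜ

lemma memA1_of {S : Finset (GlueV f1 f2 v2)} (a : {x : V₁ // x ≠ f1})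
    (h : Sum.inl a ∉ S) : a.1 ∈ glueA1 f1 S := by
  simp only [glueA1, Set.mem_compl_iff, Finset.mem_coe, Finset.mem_insert, not_or]
  refine ⟨a.2, fun hmem => ?_⟩
  obtain ⟨h', hS⟩ := mem_leftPart.mp hmem
  exact h (by rwa [show (⟨a.1, h'⟩ : {x : V₁ // x ≠ f1}) = a from Subtype.ext rfl] at hS)

lemma inl_not_mem_of_memA1 {S : Finset (GlueV f1 f2 v2)} (a : {x : V₁ // x ≠ f1})
    (h : a.1 ∈ glueA1 f1 S) : Sum.inl a ∉ S := by
  intro hS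
  simp only [glueA1, Set.mem_compl_iff, Finset.mem_coe, Finset.mem_insert, not_or] at h
  exact h.2 (mem_leftPart.mpr ⟨a.2, by rwa [show (⟨a.1, a.2⟩ : {x : V₁ // x ≠ f1}) = a from Subtype.ext rfl]⟩)

lemma memA2_of {S : Finset (GlueV f1 f2 v2)} (b : {x : V₂ // x ≠ f2 ∧ x ≠ v2})
    (h : Sum.inr b ∉ S) : b.1 ∈ glueA2 v1 S := by
  simp only [glueA2, Set.mem_compl_iff, Finset.mem_coe, Finset.mem_insert, not_or]
  refine ⟨b.2.1, fun hmem => ?_⟩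
  rcases mem_rightPart.mp hmem with ⟨h', hS⟩ | ⟨hv, -⟩
  · exact h (by rwa [show (⟨b.1, h'⟩ : {x : V₂ // x ≠ f2 ∧ x ≠ v2}) = b from Subtype.ext rfl] at hS)
  · exact b.2.2 hv

lemma inr_not_mem_of_memA2 {S : Finset (GlueV f1 f2 v2)} (b : {x : V₂ // x ≠ f2 ∧ x ≠ v2})
    (h : b.1 ∈ glueA2 v1 S) : Sum.inr b ∉ S := by
  intro hS
  simp only [glueA2, Set.mem_compl_iff, Finset.mem_coe, Finset.mem_insert, not_or] at h
  exact h.2 (mem_rightPart.mpr (Or.inl ⟨b.2, by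
    rwa [show (⟨b.1, b.2⟩ : {x : V₂ // x ≠ f2 ∧ x ≠ v2}) = b from Subtype.ext rfl]⟩))

lemma memA2_v2 {S : Finset (GlueV f1 f2 v2)} (hne1 : v1 ≠ f1) (hne2 : v2 ≠ f2)
    (h : Sum.inl ⟨v1, hne1⟩ ∉ S) : v2 ∈ glueA2 v1 S := by
  simp only [glueA2, Set.mem_compl_iff, Finset.mem_coe, Finset.mem_insert, not_or]
  refine ⟨hne2, fun hmem => ?_⟩
  rcases mem_rightPart.mp hmem with ⟨⟨-, hv⟩, -⟩ | ⟨-, h', hS⟩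
  · exact hv rfl
  · exact h (by rwa [show (⟨v1, h'⟩ : {x : V₁ // x ≠ f1}) = ⟨v1, hne1⟩ from Subtype.ext rfl] at hS)

lemma inlv_not_mem_of_memA2 {S : Finset (GlueV f1 f2 v2)} (hne1 : v1 ≠ f1)
    (h : v2 ∈ glueA2 v1 S) : Sum.inl ⟨v1, hne1⟩ ∉ S := by
  intro hS
  simp only [glueA2, Set.mem_compl_iff, Finset.mem_coe, Finset.mem_insert, not_or] at h
  exact h.2 (mem_rightPart.mpr (Or.inr ⟨rfl, hne1, hS⟩))

variable (Γ1 Γ2 v1) in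
/-- The cross-graph reachability invariant. -/
def conn {f1 : V₁} {f2 v2 : V₂} (S : Finset (GlueV f1 f2 v2)) :
    GlueV f1 f2 v2 → GlueV f1 f2 v2 → Prop
  | Sum.inl a, Sum.inl b => ∃ (ha : a.1 ∈ glueA1 f1 S) (hb : b.1 ∈ glueA1 f1 S),
      (Γ1.induce (glueA1 f1 S)).Reachable ⟨a.1, ha⟩ ⟨b.1, hb⟩
  | Sum.inl a, Sum.inr b => ∃ (h1 : v1 ∈ glueA1 f1 S) (h2 : v2 ∈ glueA2 v1 S)
      (ha : a.1 ∈ glueA1 f1 S) (hb : b.1 ∈ glueA2 v1 S),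
      (Γ1.induce (glueA1 f1 S)).Reachable ⟨a.1, ha⟩ ⟨v1, h1⟩ ∧
      (Γ2.induce (glueA2 v1 S)).Reachable ⟨v2, h2⟩ ⟨b.1, hb⟩
  | Sum.inr a, Sum.inl b => ∃ (h1 : v1 ∈ glueA1 f1 S) (h2 : v2 ∈ glueA2 v1 S)
      (ha : a.1 ∈ glueA2 v1 S) (hb : b.1 ∈ glueA1 f1 S),
      (Γ2.induce (glueA2 v1 S)).Reachable ⟨a.1, ha⟩ ⟨v2, h2⟩ ∧
      (Γ1.induce (glueA1 f1 S)).Reachable ⟨v1, h1⟩ ⟨b.1, hb⟩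
  | Sum.inr a, Sum.inr b => ∃ (ha : a.1 ∈ glueA2 v1 S) (hb : b.1 ∈ glueA2 v1 S),
      (Γ2.induce (glueA2 v1 S)).Reachable ⟨a.1, ha⟩ ⟨b.1, hb⟩


lemma reachOfEq {V : Type*} {G : SimpleGraph V} {u v : V} (h : u = v) : G.Reachable u v :=
  h ▸ Reachable.refl _

variable (Γ1 Γ2 f1 v1 f2 v2) in
def homLeft (S : Finset (GlueV f1 f2 v2)) :
    Γ1.induce (glueA1 f1 S) →g (glueGraph Γ1 Γ2 f1 v1 f2 v2).induce (glueA S) where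
  toFun x := ⟨Sum.inl ⟨x.1, fun h => x.2 (by simp [h])⟩, by
    simpa using inl_not_mem_of_memA1 ⟨x.1, fun h => x.2 (by simp [h])⟩ x.2⟩
  map_rel' := by
    intro a b hab
    simp only [comap_adj, Function.Embedding.coe_subtype] at *
    exact glue_adj_inl_inl.mpr hab

variable (v1) in
def homRightFun (hne1 : v1 ≠ f1) (S : Finset (GlueV f1 f2 v2)) (x : ↥(glueA2 v1 S)) :
    ↥(glueA S) :=
  if h : x.1 = v2 then
    ⟨Sum.inl ⟨v1, hne1⟩, by
      simpa using inlv_not_mem_of_memA2 hne1 (Set.mem_of_eq_of_mem h.symm x.2)⟩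
  else
    ⟨Sum.inr ⟨x.1, ⟨fun hf => x.2 (by simp [hf]), h⟩⟩, by
      simpa using inr_not_mem_of_memA2 ⟨x.1, ⟨fun hf => x.2 (by simp [hf]), h⟩⟩ x.2⟩

variable (Γ1 Γ2 f1 v1 f2 v2) in
def homRight (hne1 : v1 ≠ f1) (S : Finset (GlueV f1 f2 v2)) :
    Γ2.induce (glueA2 v1 S) →g (glueGraph Γ1 Γ2 f1 v1 f2 v2).induce (glueA S) where
  toFun := homRightFun v1 hne1 S
  map_rel' := by
    intro a b hab
    simp only [comap_adj, Function.Embedding.coe_subtype] at hab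
    show ((glueGraph Γ1 Γ2 f1 v1 f2 v2).induce (glueA S)).Adj
      (homRightFun v1 hne1 S a) (homRightFun v1 hne1 S b)
    unfold homRightFun
    by_cases h1 : a.1 = v2 <;> by_cases h2 : b.1 = v2
    · exact absurd (h1.trans h2.symm) hab.ne
    · rw [dif_pos h1, dif_neg h2]
      simp only [comap_adj, Function.Embedding.coe_subtype]
      exact glue_adj_inl_inr.mpr ⟨rfl, show Γ2.Adj v2 b.1 by rw [h1] at hab; exact hab⟩
    · rw [dif_neg h1, dif_pos h2]
      simp only [comap_adj, Function.Embedding.coe_subtype]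
      exact glue_adj_inr_inl.mpr ⟨rfl, show Γ2.Adj v2 a.1 by rw [h2] at hab; exact hab.symm⟩
    · rw [dif_neg h1, dif_neg h2]
      simp only [comap_adj, Function.Embedding.coe_subtype]
      exact glue_adj_inr_inr.mpr hab

lemma congrReach {V : Type*} {G : SimpleGraph V} {u v u' v' : V} (hu : u = u') (hv : v = v')
    (h : G.Reachable u v) : G.Reachable u' v' := hu ▸ hv ▸ h

lemma homLeft_apply {S : Finset (GlueV f1 f2 v2)} (x : {y : V₁ // y ≠ f1})
    (hx : x.1 ∈ glueA1 f1 S) (hz : (Sum.inl x : GlueV f1 f2 v2) ∈ glueA S) :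
    homLeft Γ1 Γ2 f1 v1 f2 v2 S ⟨x.1, hx⟩ = ⟨Sum.inl x, hz⟩ :=
  Subtype.ext (congrArg Sum.inl (Subtype.ext rfl))

lemma homRight_apply_inr {hne1 : v1 ≠ f1} {S : Finset (GlueV f1 f2 v2)}
    (x : {y : V₂ // y ≠ f2 ∧ y ≠ v2}) (hx : x.1 ∈ glueA2 v1 S)
    (hz : (Sum.inr x : GlueV f1 f2 v2) ∈ glueA S) :
    homRight Γ1 Γ2 f1 v1 f2 v2 hne1 S ⟨x.1, hx⟩ = ⟨Sum.inr x, hz⟩ := by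
  show homRightFun v1 hne1 S ⟨x.1, hx⟩ = ⟨Sum.inr x, hz⟩
  unfold homRightFun
  rw [dif_neg x.2.2]

lemma homRight_apply_v2 {hne1 : v1 ≠ f1} {S : Finset (GlueV f1 f2 v2)}
    (hx : v2 ∈ glueA2 v1 S) (hz : (Sum.inl ⟨v1, hne1⟩ : GlueV f1 f2 v2) ∈ glueA S) :
    homRight Γ1 Γ2 f1 v1 f2 v2 hne1 S ⟨v2, hx⟩ = ⟨Sum.inl ⟨v1, hne1⟩, hz⟩ := by
  show homRightFun v1 hne1 S ⟨v2, hx⟩ = ⟨Sum.inl ⟨v1, hne1⟩, hz⟩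
  unfold homRightFun
  rw [dif_pos rfl]

lemma reach_of_conn (hne1 : v1 ≠ f1) {S : Finset (GlueV f1 f2 v2)}
    (p q : ↥(glueA S)) (h : conn Γ1 Γ2 v1 S p.1 q.1) :
    ((glueGraph Γ1 Γ2 f1 v1 f2 v2).induce (glueA S)).Reachable p q := by
  obtain ⟨zp, hzp⟩ := p
  obtain ⟨zq, hzq⟩ := q
  cases zp with
  | inl a =>
    cases zq with
    | inl b =>
      obtain ⟨ha, hb, r⟩ := h
      exact congrReach (homLeft_apply a ha hzp) (homLeft_apply b hb hzq)
        (r.map (homLeft Γ1 Γ2 f1 v1 f2 v2 S))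
    | inr b =>
      obtain ⟨h1, h2, ha, hb, r1, r2⟩ := h
      have hm : (Sum.inl ⟨v1, hne1⟩ : GlueV f1 f2 v2) ∈ glueA S := by
        simpa using inl_not_mem_of_memA1 ⟨v1, hne1⟩ h1
      have t1 := congrReach (homLeft_apply a ha hzp) (homLeft_apply ⟨v1, hne1⟩ h1 hm)
        (r1.map (homLeft Γ1 Γ2 f1 v1 f2 v2 S))
      have t2 := congrReach (homRight_apply_v2 h2 hm) (homRight_apply_inr b hb hzq)
        (r2.map (homRight Γ1 Γ2 f1 v1 f2 v2 hne1 S))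
      exact t1.trans t2
  | inr a =>
    cases zq with
    | inl b =>
      obtain ⟨h1, h2, ha, hb, r1, r2⟩ := h
      have hm : (Sum.inl ⟨v1, hne1⟩ : GlueV f1 f2 v2) ∈ glueA S := by
        simpa using inl_not_mem_of_memA1 ⟨v1, hne1⟩ h1
      have t1 := congrReach (homRight_apply_inr a ha hzp) (homRight_apply_v2 h2 hm)
        (r1.map (homRight Γ1 Γ2 f1 v1 f2 v2 hne1 S))
      have t2 := congrReach (homLeft_apply ⟨v1, hne1⟩ h1 hm) (homLeft_apply b hb hzq)
        (r2.map (homLeft Γ1 Γ2 f1 v1 f2 v2 S))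
      exact t1.trans t2
    | inr b =>
      obtain ⟨ha, hb, r⟩ := h
      exact congrReach (homRight_apply_inr a ha hzp) (homRight_apply_inr b hb hzq)
        (r.map (homRight Γ1 Γ2 f1 v1 f2 v2 hne1 S))

lemma conn_of_reach (hne1 : v1 ≠ f1) (hne2 : v2 ≠ f2) {S : Finset (GlueV f1 f2 v2)}
    (p q : ↥(glueA S)) (h : ((glueGraph Γ1 Γ2 f1 v1 f2 v2).induce (glueA S)).Reachable p q) :
    conn Γ1 Γ2 v1 S p.1 q.1 := by
  obtain ⟨w⟩ := h
  induction w with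
  | @nil u =>
    obtain ⟨z, hz⟩ := u
    cases z with
    | inl a => exact ⟨memA1_of a (by simpa using hz), memA1_of a (by simpa using hz),
        Reachable.refl _⟩
    | inr a => exact ⟨memA2_of a (by simpa using hz), memA2_of a (by simpa using hz),
        Reachable.refl _⟩
  | @cons a b c hab w ih =>
    obtain ⟨za, hza⟩ := a
    obtain ⟨zb, hzb⟩ := b
    cases za with
    | inl x =>
      cases zb with
      | inl y =>
        have hadj : Γ1.Adj x.1 y.1 := glue_adj_inl_inl.mp (by simpa using hab)
        have hx := memA1_of x (by simpa using hza)
        have hy := memA1_of y (by simpa using hzb)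
        have e0 : (Γ1.induce (glueA1 f1 S)).Adj ⟨x.1, hx⟩ ⟨y.1, hy⟩ := by
          simp only [comap_adj, Function.Embedding.coe_subtype]; exact hadj
        obtain ⟨zc, hzc⟩ := c
        cases zc with
        | inl z =>
          obtain ⟨hy', hz', r⟩ := ih
          exact ⟨hx, hz', e0.reachable.trans r⟩
        | inr z =>
          obtain ⟨h1, h2, hy', hz', r1, r2⟩ := ih
          exact ⟨h1, h2, hx, hz', e0.reachable.trans r1, r2⟩
      | inr y =>
        obtain ⟨hv1, hadj2⟩ := glue_adj_inl_inr.mp (by simpa using hab)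
        have hx := memA1_of x (by simpa using hza)
        have h1 : v1 ∈ glueA1 f1 S := hv1 ▸ hx
        have hnv : (Sum.inl ⟨v1, hne1⟩ : GlueV f1 f2 v2) ∉ S := by
          rw [show (⟨v1, hne1⟩ : {t : V₁ // t ≠ f1}) = x from Subtype.ext hv1.symm]
          simpa using hza
        have h2 : v2 ∈ glueA2 v1 S := memA2_v2 hne1 hne2 hnv
        have hyA : y.1 ∈ glueA2 v1 S := memA2_of y (by simpa using hzb)
        have e2 : (Γ2.induce (glueA2 v1 S)).Adj ⟨v2, h2⟩ ⟨y.1, hyA⟩ := by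
          simp only [comap_adj, Function.Embedding.coe_subtype]; exact hadj2
        obtain ⟨zc, hzc⟩ := c
        cases zc with
        | inl z =>
          obtain ⟨h1', h2', hy', hz', r2', r1'⟩ := ih
          have e1 : (⟨x.1, hx⟩ : ↥(glueA1 f1 S)) = ⟨v1, h1'⟩ := Subtype.ext hv1
          exact ⟨hx, hz', (reachOfEq e1).trans r1'⟩
        | inr z =>
          obtain ⟨hy', hz', r⟩ := ih
          have e1 : (⟨x.1, hx⟩ : ↥(glueA1 f1 S)) = ⟨v1, h1⟩ := Subtype.ext hv1
          exact ⟨h1, h2, hx, hz', reachOfEq e1, e2.reachable.trans r⟩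
    | inr x =>
      cases zb with
      | inl y =>
        obtain ⟨hv1, hadj2⟩ := glue_adj_inr_inl.mp (by simpa using hab)
        have hyB := memA1_of y (by simpa using hzb)
        have h1 : v1 ∈ glueA1 f1 S := hv1 ▸ hyB
        have hnv : (Sum.inl ⟨v1, hne1⟩ : GlueV f1 f2 v2) ∉ S := by
          rw [show (⟨v1, hne1⟩ : {t : V₁ // t ≠ f1}) = y from Subtype.ext hv1.symm]
          simpa using hzb
        have h2 : v2 ∈ glueA2 v1 S := memA2_v2 hne1 hne2 hnv
        have hxA : x.1 ∈ glueA2 v1 S := memA2_of x (by simpa using hza)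
        have e2 : (Γ2.induce (glueA2 v1 S)).Adj ⟨x.1, hxA⟩ ⟨v2, h2⟩ := by
          simp only [comap_adj, Function.Embedding.coe_subtype]; exact hadj2.symm
        obtain ⟨zc, hzc⟩ := c
        cases zc with
        | inl z =>
          obtain ⟨hy', hz', r⟩ := ih
          have e1 : (⟨v1, h1⟩ : ↥(glueA1 f1 S)) = ⟨y.1, hy'⟩ := Subtype.ext hv1.symm
          exact ⟨h1, h2, hxA, hz', e2.reachable, (reachOfEq e1).trans r⟩
        | inr z =>
          obtain ⟨h1', h2', hy', hz', r1', r2'⟩ := ih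
          exact ⟨hxA, hz', e2.reachable.trans r2'⟩
      | inr y =>
        have hadj : Γ2.Adj x.1 y.1 := glue_adj_inr_inr.mp (by simpa using hab)
        have hxA : x.1 ∈ glueA2 v1 S := memA2_of x (by simpa using hza)
        have hyA : y.1 ∈ glueA2 v1 S := memA2_of y (by simpa using hzb)
        have e0 : (Γ2.induce (glueA2 v1 S)).Adj ⟨x.1, hxA⟩ ⟨y.1, hyA⟩ := by
          simp only [comap_adj, Function.Embedding.coe_subtype]; exact hadj
        obtain ⟨zc, hzc⟩ := c
        cases zc with
        | inl z =>
          obtain ⟨h1, h2, hy', hz', r2', r1'⟩ := ih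
          exact ⟨h1, h2, hxA, hz', e0.reachable.trans r2', r1'⟩
        | inr z =>
          obtain ⟨hy', hz', r⟩ := ih
          exact ⟨hxA, hz', e0.reachable.trans r⟩

lemma inl_mem_S {S : Finset (GlueV f1 f2 v2)} {a : {x : V₁ // x ≠ f1}}
    (h : Sum.inl a ∈ S) : a.1 ∈ leftPart S :=
  mem_leftPart.mpr ⟨a.2, by rwa [show (⟨a.1, a.2⟩ : {x : V₁ // x ≠ f1}) = a from Subtype.ext rfl]⟩

lemma not_mem_leftPart {S : Finset (GlueV f1 f2 v2)} {a : {x : V₁ // x ≠ f1}}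
    (h : Sum.inl a ∉ S) : a.1 ∉ leftPart S := by
  intro hm
  obtain ⟨h', hS⟩ := mem_leftPart.mp hm
  exact h (by rwa [show (⟨a.1, h'⟩ : {x : V₁ // x ≠ f1}) = a from Subtype.ext rfl] at hS)

lemma inr_mem_S {S : Finset (GlueV f1 f2 v2)} {b : {x : V₂ // x ≠ f2 ∧ x ≠ v2}}
    (h : Sum.inr b ∈ S) : b.1 ∈ rightPart v1 S :=
  mem_rightPart.mpr (Or.inl ⟨b.2, by
    rwa [show (⟨b.1, b.2⟩ : {x : V₂ // x ≠ f2 ∧ x ≠ v2}) = b from Subtype.ext rfl]⟩)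

lemma not_mem_rightPart {S : Finset (GlueV f1 f2 v2)} {b : {x : V₂ // x ≠ f2 ∧ x ≠ v2}}
    (h : Sum.inr b ∉ S) : b.1 ∉ rightPart v1 S := by
  intro hm
  rcases mem_rightPart.mp hm with ⟨h', hS⟩ | ⟨hv, -⟩
  · exact h (by rwa [show (⟨b.1, h'⟩ : {x : V₂ // x ≠ f2 ∧ x ≠ v2}) = b from Subtype.ext rfl] at hS)
  · exact b.2.2 hv

lemma inlv_mem_S {S : Finset (GlueV f1 f2 v2)} {hne1 : v1 ≠ f1}
    (h : Sum.inl ⟨v1, hne1⟩ ∈ S) : v2 ∈ rightPart v1 S :=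
  mem_rightPart.mpr (Or.inr ⟨rfl, hne1, h⟩)

lemma not_mem_rightPart_v2 {S : Finset (GlueV f1 f2 v2)} {hne1 : v1 ≠ f1}
    (h : Sum.inl ⟨v1, hne1⟩ ∉ S) : v2 ∉ rightPart v1 S := by
  intro hm
  rcases mem_rightPart.mp hm with ⟨⟨-, hv⟩, -⟩ | ⟨-, h', hS⟩
  · exact hv rfl
  · exact h (by rwa [show (⟨v1, h'⟩ : {x : V₁ // x ≠ f1}) = ⟨v1, hne1⟩ from Subtype.ext rfl] at hS)

lemma leftPart_no_f1 {S : Finset (GlueV f1 f2 v2)} : f1 ∉ leftPart S := by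
  intro hm
  obtain ⟨h', -⟩ := mem_leftPart.mp hm
  exact h' rfl

lemma rightPart_no_f2 (hne2 : v2 ≠ f2) {S : Finset (GlueV f1 f2 v2)} :
    f2 ∉ rightPart v1 S := by
  intro hm
  rcases mem_rightPart.mp hm with ⟨⟨h', -⟩, -⟩ | ⟨hv, -⟩
  · exact h' rfl
  · exact hne2 hv.symm

lemma glue_recon (hne1 : v1 ≠ f1) (S : Finset (GlueV f1 f2 v2)) :
    S = liftLeft (leftPart S) ∪ liftRight hne1 (rightPart v1 S) := by
  ext z
  rw [Finset.mem_union]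
  cases z with
  | inl a =>
    rw [inl_mem_liftLeft, inl_mem_liftRight]
    constructor
    · intro h
      exact Or.inl (inl_mem_S h)
    · rintro (h | ⟨hv, h2⟩)
      · obtain ⟨h', hS⟩ := mem_leftPart.mp h
        rwa [show (⟨a.1, h'⟩ : {x : V₁ // x ≠ f1}) = a from Subtype.ext rfl] at hS
      · rcases mem_rightPart.mp h2 with ⟨⟨-, hvv⟩, -⟩ | ⟨-, h', hS⟩
        · exact absurd rfl hvv
        · rwa [show a = (⟨v1, h'⟩ : {x : V₁ // x ≠ f1}) from Subtype.ext hv]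
  | inr b =>
    rw [inr_mem_liftRight]
    constructor
    · intro h
      exact Or.inr (inr_mem_S h)
    · rintro (h | h)
      · exact absurd h inr_not_mem_liftLeft
      · rcases mem_rightPart.mp h with ⟨h', hS⟩ | ⟨hv, -⟩
        · rwa [show (⟨b.1, h'⟩ : {x : V₂ // x ≠ f2 ∧ x ≠ v2}) = b from Subtype.ext rfl] at hS
        · exact absurd hv b.2.2

lemma leftPart_lift (hne1 : v1 ≠ f1) {S1 : Finset V₁} {S2 : Finset V₂}
    (hf1 : f1 ∉ S1) (hiff : v1 ∈ S1 ↔ v2 ∈ S2) :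
    leftPart (liftLeft S1 ∪ liftRight hne1 S2 : Finset (GlueV f1 f2 v2)) = S1 := by
  ext j
  rw [mem_leftPart]
  constructor
  · rintro ⟨h, hS⟩
    rw [Finset.mem_union, inl_mem_liftLeft, inl_mem_liftRight] at hS
    rcases hS with h' | ⟨hv, h2⟩
    · exact h'
    · rw [show j = v1 from hv]
      exact hiff.mpr h2
  · intro hj
    refine ⟨fun e => hf1 (e ▸ hj), ?_⟩
    rw [Finset.mem_union, inl_mem_liftLeft]
    exact Or.inl hj

lemma rightPart_lift (hne1 : v1 ≠ f1) (hne2 : v2 ≠ f2) {S1 : Finset V₁} {S2 : Finset V₂}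
    (hf2 : f2 ∉ S2) (hiff : v1 ∈ S1 ↔ v2 ∈ S2) :
    rightPart v1 (liftLeft S1 ∪ liftRight hne1 S2 : Finset (GlueV f1 f2 v2)) = S2 := by
  ext j
  rw [mem_rightPart]
  constructor
  · rintro (⟨h, hS⟩ | ⟨hv, h', hS⟩)
    · rw [Finset.mem_union, inr_mem_liftRight] at hS
      rcases hS with h' | h'
      · exact absurd h' inr_not_mem_liftLeft
      · exact h'
    · rw [Finset.mem_union, inl_mem_liftLeft, inl_mem_liftRight] at hS
      rw [hv]
      rcases hS with h1 | ⟨-, h2⟩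
      · exact hiff.mp h1
      · exact h2
  · intro hj
    by_cases hv : j = v2
    · refine Or.inr ⟨hv, hne1, ?_⟩
      rw [Finset.mem_union, inl_mem_liftRight]
      exact Or.inr ⟨rfl, hv ▸ hj⟩
    · refine Or.inl ⟨⟨fun e => hf2 (e ▸ hj), hv⟩, ?_⟩
      rw [Finset.mem_union, inr_mem_liftRight]
      exact Or.inr hj

end Glue

lemma leaf_not_mem_cutset {V : Type*} [Fintype V] [DecidableEq V] {Γ : SimpleGraph V}
    {f v : V} [DecidableRel Γ.Adj] (hl : Γ.degree f = 1) (ha : Γ.Adj f v)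
    {S : Finset V} (hcut : IsCutSet Γ S) : f ∉ S := by
  intro hf
  rcases hcut with hS | ⟨-, hall⟩
  · rw [hS] at hf; exact absurd hf (Finset.notMem_empty _)
  · obtain ⟨x, y, hx, hy, hax, hay, hnr⟩ :=
      (numComp_erase_lt_iff Γ S f hf).mp (hall f hf)
    have hxv : x = v := leaf_nbr Γ hl ha hax
    have hyv : y = v := leaf_nbr Γ hl ha hay
    exact hnr (reachOfEq (Subtype.ext (hxv.trans hyv.symm)))


end Aux

set_option maxHeartbeats 1000000 in
theorem stmt11 {V₁ V₂ : Type*} [Fintype V₁] [DecidableEq V₁] [Fintype V₂] [DecidableEq V₂]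
    (Γ1 : SimpleGraph V₁) (Γ2 : SimpleGraph V₂)
    [DecidableRel Γ1.Adj] [DecidableRel Γ2.Adj]
    (hconn1 : Γ1.Connected) (hconn2 : Γ2.Connected)
    (f1 v1 : V₁) (f2 v2 : V₂)
    (hl1 : Γ1.degree f1 = 1) (hl2 : Γ2.degree f2 = 1)
    (ha1 : Γ1.Adj f1 v1) (ha2 : Γ2.Adj f2 v2)
    (hd1 : 3 ≤ Γ1.degree v1) (hd2 : 3 ≤ Γ2.degree v2)
    (hne1 : v1 ≠ f1) (hne2 : v2 ≠ f2)
    (hu1 : ∃ u1, Γ1.Adj v1 u1 ∧ Γ1.degree u1 = 2)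
    (hu2 : ∃ u2, Γ2.Adj v2 u2 ∧ Γ2.degree u2 = 2) :
    ∀ S : Finset (GlueV f1 f2 v2), IsCutSet (glueGraph Γ1 Γ2 f1 v1 f2 v2) S ↔
      ∃ (S1 : Finset V₁) (S2 : Finset V₂), IsCutSet Γ1 S1 ∧ IsCutSet Γ2 S2 ∧
        ((v1 ∉ S1 ∧ v2 ∉ S2) ∨ (v1 ∈ S1 ∧ v2 ∈ S2)) ∧
        S = liftLeft S1 ∪ liftRight hne1 S2 := by
  intro S
  constructor
  · intro hcut
    simp only [IsCutSet] at hcut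
    rcases hcut with hS | ⟨hSne, hall⟩
    · refine ⟨∅, ∅, Or.inl rfl, Or.inl rfl,
        Or.inl ⟨Finset.notMem_empty _, Finset.notMem_empty _⟩, ?_⟩
      rw [hS]
      simp [liftLeft, liftRight]
    · refine ⟨leftPart S, rightPart v1 S, ?_, ?_, ?_, glue_recon hne1 S⟩
      · -- `leftPart S` is a cut set of `Γ1`
        simp only [IsCutSet]
        by_cases hS1 : leftPart S = ∅
        · exact Or.inl hS1
        refine Or.inr ⟨hS1, fun j hj => ?_⟩
        refine (numComp_erase_lt_iff Γ1 (leftPart S) j hj).mpr ?_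
        obtain ⟨hjf, hjS⟩ := mem_leftPart.mp hj
        by_cases hjv : j = v1
        · by_cases hex : ∃ x, Γ1.Adj j x ∧ x ∉ leftPart S ∧ x ≠ f1
          · obtain ⟨x, hadj, hxS, hxf⟩ := hex
            have hxm : x ∈ ((↑(leftPart S) : Set V₁))ᶜ := by simpa using hxS
            have hfm : f1 ∈ ((↑(leftPart S) : Set V₁))ᶜ := by
              simpa using (leftPart_no_f1 (S := S))
            have haf : Γ1.Adj j f1 := by rw [hjv]; exact ha1.symm
            have hvS1 : v1 ∈ leftPart S := hjv ▸ hj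
            exact ⟨x, f1, hxm, hfm, hadj, haf,
              leaf_isolated Γ1 hl1 ha1 (leftPart S) hvS1 hxm hfm hxf⟩
          · exfalso
            obtain ⟨u1, hadju, hdegu⟩ := hu1
            have huf : u1 ≠ f1 := by
              intro h
              rw [h, hl1] at hdegu
              exact absurd hdegu (by norm_num)
            have huS : u1 ∈ leftPart S := by
              by_contra hns
              exact hex ⟨u1, by rw [hjv]; exact hadju, hns, huf⟩
            obtain ⟨hu1f, huinS⟩ := mem_leftPart.mp huS
            obtain ⟨x, y, hx, hy, hax, hay, hnr⟩ :=
              (numComp_erase_lt_iff (glueGraph Γ1 Γ2 f1 v1 f2 v2) S _ huinS).mp (hall _ huinS)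
            have hux : u1 ≠ v1 := hadju.ne'
            obtain ⟨xa, rfl, haxa⟩ : ∃ xa, x = Sum.inl xa ∧ Γ1.Adj u1 xa.1 := by
              cases x with
              | inl xa => exact ⟨xa, rfl, glue_adj_inl_inl.mp hax⟩
              | inr xb => exact absurd (glue_adj_inl_inr.mp hax).1 hux
            obtain ⟨ya, rfl, haya⟩ : ∃ ya, y = Sum.inl ya ∧ Γ1.Adj u1 ya.1 := by
              cases y with
              | inl ya => exact ⟨ya, rfl, glue_adj_inl_inl.mp hay⟩
              | inr yb => exact absurd (glue_adj_inl_inr.mp hay).1 hux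
            have hxnS : Sum.inl xa ∉ S := by simpa using hx
            have hynS : Sum.inl ya ∉ S := by simpa using hy
            have hxv : xa.1 ≠ v1 := fun h => hxnS (by
              rw [show xa = (⟨j, hjf⟩ : {t : V₁ // t ≠ f1}) from
                Subtype.ext (h.trans hjv.symm)]; exact hjS)
            have hyv : ya.1 ≠ v1 := fun h => hynS (by
              rw [show ya = (⟨j, hjf⟩ : {t : V₁ // t ≠ f1}) from
                Subtype.ext (h.trans hjv.symm)]; exact hjS)
            have hxyeq : xa.1 = ya.1 := deg2_nbr Γ1 hdegu hadju.symm haxa haya hxv hyv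
            exact hnr (reachOfEq (Subtype.ext (congrArg Sum.inl (Subtype.ext hxyeq))))
        · obtain ⟨x, y, hx, hy, hax, hay, hnr⟩ :=
            (numComp_erase_lt_iff (glueGraph Γ1 Γ2 f1 v1 f2 v2) S _ hjS).mp (hall _ hjS)
          obtain ⟨xa, rfl, haxa⟩ : ∃ xa, x = Sum.inl xa ∧ Γ1.Adj j xa.1 := by
            cases x with
            | inl xa => exact ⟨xa, rfl, glue_adj_inl_inl.mp hax⟩
            | inr xb => exact absurd (glue_adj_inl_inr.mp hax).1 hjv
          obtain ⟨ya, rfl, haya⟩ : ∃ ya, y = Sum.inl ya ∧ Γ1.Adj j ya.1 := by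
            cases y with
            | inl ya => exact ⟨ya, rfl, glue_adj_inl_inl.mp hay⟩
            | inr yb => exact absurd (glue_adj_inl_inr.mp hay).1 hjv
          have hxnS : Sum.inl xa ∉ S := by simpa using hx
          have hynS : Sum.inl ya ∉ S := by simpa using hy
          have hxm : xa.1 ∉ leftPart S := not_mem_leftPart hxnS
          have hym : ya.1 ∉ leftPart S := not_mem_leftPart hynS
          refine ⟨xa.1, ya.1, by simpa using hxm, by simpa using hym, haxa, haya, ?_⟩
          intro r
          have hxA1 : xa.1 ∈ glueA1 f1 S := memA1_of xa hxnS
          have hyA1 : ya.1 ∈ glueA1 f1 S := memA1_of ya hynS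
          have r' := reach_of_reach_erase_leaf Γ1 hl1 ha1 (leftPart S)
            (by simpa using hxm) (by simpa using hym) xa.2 ya.2 hxA1 hyA1 r
          exact hnr (reach_of_conn (Γ1 := Γ1) (Γ2 := Γ2) hne1 ⟨Sum.inl xa, hx⟩ ⟨Sum.inl ya, hy⟩ ⟨hxA1, hyA1, r'⟩)
      · -- `rightPart v1 S` is a cut set of `Γ2`
        simp only [IsCutSet]
        by_cases hS2 : rightPart v1 S = ∅
        · exact Or.inl hS2
        refine Or.inr ⟨hS2, fun j hj => ?_⟩
        refine (numComp_erase_lt_iff Γ2 (rightPart v1 S) j hj).mpr ?_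
        rcases mem_rightPart.mp hj with ⟨hj2, hjS⟩ | ⟨hjv2, h', hvS'⟩
        · obtain ⟨x, y, hx, hy, hax, hay, hnr⟩ :=
            (numComp_erase_lt_iff (glueGraph Γ1 Γ2 f1 v1 f2 v2) S _ hjS).mp (hall _ hjS)
          have hxy : x ≠ y := fun h => hnr (reachOfEq (Subtype.ext h))
          cases x with
          | inl xa =>
            obtain ⟨hcx1, hcx2⟩ := glue_adj_inr_inl.mp hax
            have hxnS : Sum.inl xa ∉ S := by simpa using hx
            have hxv1 : (Sum.inl ⟨v1, hne1⟩ : GlueV f1 f2 v2) ∉ S := by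
              rwa [show (⟨v1, hne1⟩ : {t : V₁ // t ≠ f1}) = xa from Subtype.ext hcx1.symm]
            cases y with
            | inl ya =>
              exfalso
              obtain ⟨hcy1, -⟩ := glue_adj_inr_inl.mp hay
              exact hxy (congrArg Sum.inl (Subtype.ext (hcx1.trans hcy1.symm)))
            | inr yb =>
              have hcy : Γ2.Adj j yb.1 := glue_adj_inr_inr.mp hay
              have hynS : Sum.inr yb ∉ S := by simpa using hy
              have hv2m : v2 ∉ rightPart v1 S := not_mem_rightPart_v2 hxv1
              have hybm : yb.1 ∉ rightPart v1 S := not_mem_rightPart hynS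
              refine ⟨v2, yb.1, by simpa using hv2m, by simpa using hybm, hcx2.symm, hcy, ?_⟩
              intro r
              have h2A : v2 ∈ glueA2 v1 S := memA2_v2 hne1 hne2 hxv1
              have hybA : yb.1 ∈ glueA2 v1 S := memA2_of yb hynS
              have r' := reach_of_reach_erase_leaf Γ2 hl2 ha2 (rightPart v1 S)
                (by simpa using hv2m) (by simpa using hybm) hne2 yb.2.1 h2A hybA r
              have h1A : v1 ∈ glueA1 f1 S := memA1_of ⟨v1, hne1⟩ hxv1
              have hgx : (Sum.inl ⟨v1, hne1⟩ : GlueV f1 f2 v2) ∈ glueA S := by simpa using hxv1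
              have rg := reach_of_conn (Γ1 := Γ1) (Γ2 := Γ2) hne1 ⟨Sum.inl ⟨v1, hne1⟩, hgx⟩ ⟨Sum.inr yb, hy⟩
                ⟨h1A, h2A, h1A, hybA, Reachable.refl _, r'⟩
              exact hnr (congrReach
                (Subtype.ext (congrArg Sum.inl (Subtype.ext hcx1.symm))) rfl rg)
          | inr xb =>
            have hcx : Γ2.Adj j xb.1 := glue_adj_inr_inr.mp hax
            have hxnS : Sum.inr xb ∉ S := by simpa using hx
            have hxbm : xb.1 ∉ rightPart v1 S := not_mem_rightPart hxnS
            have hxbA : xb.1 ∈ glueA2 v1 S := memA2_of xb hxnS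
            cases y with
            | inl ya =>
              obtain ⟨hcy1, hcy2⟩ := glue_adj_inr_inl.mp hay
              have hynS : Sum.inl ya ∉ S := by simpa using hy
              have hyv1 : (Sum.inl ⟨v1, hne1⟩ : GlueV f1 f2 v2) ∉ S := by
                rwa [show (⟨v1, hne1⟩ : {t : V₁ // t ≠ f1}) = ya from Subtype.ext hcy1.symm]
              have hv2m : v2 ∉ rightPart v1 S := not_mem_rightPart_v2 hyv1
              refine ⟨xb.1, v2, by simpa using hxbm, by simpa using hv2m, hcx, hcy2.symm, ?_⟩
              intro r
              have h2A : v2 ∈ glueA2 v1 S := memA2_v2 hne1 hne2 hyv1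
              have r' := reach_of_reach_erase_leaf Γ2 hl2 ha2 (rightPart v1 S)
                (by simpa using hxbm) (by simpa using hv2m) xb.2.1 hne2 hxbA h2A r
              have h1A : v1 ∈ glueA1 f1 S := memA1_of ⟨v1, hne1⟩ hyv1
              have hgy : (Sum.inl ⟨v1, hne1⟩ : GlueV f1 f2 v2) ∈ glueA S := by simpa using hyv1
              have rg := reach_of_conn (Γ1 := Γ1) (Γ2 := Γ2) hne1 ⟨Sum.inr xb, hx⟩ ⟨Sum.inl ⟨v1, hne1⟩, hgy⟩
                ⟨h1A, h2A, hxbA, h1A, r', Reachable.refl _⟩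
              exact hnr (congrReach rfl
                (Subtype.ext (congrArg Sum.inl (Subtype.ext hcy1.symm))) rg)
            | inr yb =>
              have hcy : Γ2.Adj j yb.1 := glue_adj_inr_inr.mp hay
              have hynS : Sum.inr yb ∉ S := by simpa using hy
              have hybm : yb.1 ∉ rightPart v1 S := not_mem_rightPart hynS
              have hybA : yb.1 ∈ glueA2 v1 S := memA2_of yb hynS
              refine ⟨xb.1, yb.1, by simpa using hxbm, by simpa using hybm, hcx, hcy, ?_⟩
              intro r
              have r' := reach_of_reach_erase_leaf Γ2 hl2 ha2 (rightPart v1 S)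
                (by simpa using hxbm) (by simpa using hybm) xb.2.1 yb.2.1 hxbA hybA r
              exact hnr (reach_of_conn (Γ1 := Γ1) (Γ2 := Γ2) hne1 ⟨Sum.inr xb, hx⟩ ⟨Sum.inr yb, hy⟩ ⟨hxbA, hybA, r'⟩)
        · by_cases hex : ∃ x, Γ2.Adj j x ∧ x ∉ rightPart v1 S ∧ x ≠ f2
          · obtain ⟨x, hadj, hxS, hxf⟩ := hex
            have hxm : x ∈ ((↑(rightPart v1 S) : Set V₂))ᶜ := by simpa using hxS
            have hfm : f2 ∈ ((↑(rightPart v1 S) : Set V₂))ᶜ := by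
              simpa using (rightPart_no_f2 hne2 (S := S))
            have haf : Γ2.Adj j f2 := by rw [hjv2]; exact ha2.symm
            have hvS2 : v2 ∈ rightPart v1 S := hjv2 ▸ hj
            exact ⟨x, f2, hxm, hfm, hadj, haf,
              leaf_isolated Γ2 hl2 ha2 (rightPart v1 S) hvS2 hxm hfm hxf⟩
          · exfalso
            obtain ⟨u2, hadju, hdegu⟩ := hu2
            have huf : u2 ≠ f2 := by
              intro h
              rw [h, hl2] at hdegu
              exact absurd hdegu (by norm_num)
            have huv : u2 ≠ v2 := hadju.ne'
            have huS : u2 ∈ rightPart v1 S := by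
              by_contra hns
              exact hex ⟨u2, by rw [hjv2]; exact hadju, hns, huf⟩
            have huinS : (Sum.inr ⟨u2, huf, huv⟩ : GlueV f1 f2 v2) ∈ S := by
              rcases mem_rightPart.mp huS with ⟨h'', hS''⟩ | ⟨hv, -⟩
              · rwa [show (⟨u2, h''⟩ : {t : V₂ // t ≠ f2 ∧ t ≠ v2}) = ⟨u2, huf, huv⟩
                  from Subtype.ext rfl] at hS''
              · exact absurd hv huv
            obtain ⟨x, y, hx, hy, hax, hay, hnr⟩ :=
              (numComp_erase_lt_iff (glueGraph Γ1 Γ2 f1 v1 f2 v2) S _ huinS).mp (hall _ huinS)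
            obtain ⟨xb, rfl, haxb⟩ : ∃ xb, x = Sum.inr xb ∧ Γ2.Adj u2 xb.1 := by
              cases x with
              | inl xa =>
                exfalso
                obtain ⟨hc1, -⟩ := glue_adj_inr_inl.mp hax
                have : Sum.inl xa ∈ S := by
                  rw [show xa = (⟨v1, h'⟩ : {t : V₁ // t ≠ f1}) from Subtype.ext hc1]
                  exact hvS'
                exact (by simpa using hx : Sum.inl xa ∉ S) this
              | inr xb => exact ⟨xb, rfl, glue_adj_inr_inr.mp hax⟩
            obtain ⟨yb, rfl, hayb⟩ : ∃ yb, y = Sum.inr yb ∧ Γ2.Adj u2 yb.1 := by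
              cases y with
              | inl ya =>
                exfalso
                obtain ⟨hc1, -⟩ := glue_adj_inr_inl.mp hay
                have : Sum.inl ya ∈ S := by
                  rw [show ya = (⟨v1, h'⟩ : {t : V₁ // t ≠ f1}) from Subtype.ext hc1]
                  exact hvS'
                exact (by simpa using hy : Sum.inl ya ∉ S) this
              | inr yb => exact ⟨yb, rfl, glue_adj_inr_inr.mp hay⟩
            have hxyeq : xb.1 = yb.1 :=
              deg2_nbr Γ2 hdegu hadju.symm haxb hayb xb.2.2 yb.2.2
            exact hnr (reachOfEq (Subtype.ext (congrArg Sum.inr (Subtype.ext hxyeq))))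
      · -- the condition on `v`
        by_cases h : (Sum.inl ⟨v1, hne1⟩ : GlueV f1 f2 v2) ∈ S
        · exact Or.inr ⟨inl_mem_S h, inlv_mem_S h⟩
        · refine Or.inl ⟨?_, not_mem_rightPart_v2 h⟩
          intro hv
          obtain ⟨h', hS'⟩ := mem_leftPart.mp hv
          exact h (by rwa [show (⟨v1, h'⟩ : {t : V₁ // t ≠ f1}) = ⟨v1, hne1⟩
            from Subtype.ext rfl] at hS')
  · rintro ⟨S1, S2, hc1, hc2, hcond, rfl⟩
    have hf1 : f1 ∉ S1 := leaf_not_mem_cutset hl1 ha1 hc1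
    have hf2 : f2 ∉ S2 := leaf_not_mem_cutset hl2 ha2 hc2
    have hiff0 : v1 ∈ S1 ↔ v2 ∈ S2 := by
      rcases hcond with ⟨h1, h2⟩ | ⟨h1, h2⟩
      · exact ⟨fun h => absurd h h1, fun h => absurd h h2⟩
      · exact ⟨fun _ => h2, fun _ => h1⟩
    set S : Finset (GlueV f1 f2 v2) := liftLeft S1 ∪ liftRight hne1 S2 with hSdef
    have hL : leftPart S = S1 := leftPart_lift hne1 hf1 hiff0
    have hR : rightPart v1 S = S2 := rightPart_lift hne1 hne2 hf2 hiff0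
    rw [← hL] at hc1 hiff0
    rw [← hR] at hc2 hiff0
    simp only [IsCutSet] at hc1 hc2 ⊢
    by_cases hS : S = ∅
    · exact Or.inl hS
    refine Or.inr ⟨hS, fun i hi => ?_⟩
    refine (numComp_erase_lt_iff (glueGraph Γ1 Γ2 f1 v1 f2 v2) S i hi).mpr ?_
    cases i with
    | inl a =>
      have haS : a.1 ∈ leftPart S := inl_mem_S hi
      rcases hc1 with he | ⟨-, hall1⟩
      · rw [he] at haS
        exact absurd haS (Finset.notMem_empty _)
      obtain ⟨x, y, hx, hy, hax, hay, hnr⟩ :=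
        (numComp_erase_lt_iff Γ1 (leftPart S) _ haS).mp (hall1 _ haS)
      have hxy : x ≠ y := fun h => hnr (reachOfEq (Subtype.ext h))
      by_cases hav : a.1 = v1
      · obtain ⟨x', hx'S, hax', hx'f⟩ :
            ∃ x', x' ∉ leftPart S ∧ Γ1.Adj a.1 x' ∧ x' ≠ f1 := by
          by_cases hxf : x = f1
          · exact ⟨y, by simpa using hy, hay, fun h => hxy (hxf.trans h.symm)⟩
          · exact ⟨x, by simpa using hx, hax, hxf⟩
        have hv1S : v1 ∈ leftPart S := hav ▸ haS
        have hv2S : v2 ∈ rightPart v1 S := hiff0.mp hv1S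
        rcases hc2 with he2 | ⟨-, hall2⟩
        · rw [he2] at hv2S
          exact absurd hv2S (Finset.notMem_empty _)
        obtain ⟨x2, y2, hx2, hy2, hax2, hay2, hnr2⟩ :=
          (numComp_erase_lt_iff Γ2 (rightPart v1 S) _ hv2S).mp (hall2 _ hv2S)
        have hxy2 : x2 ≠ y2 := fun h => hnr2 (reachOfEq (Subtype.ext h))
        obtain ⟨y', hy'S, hay', hy'f⟩ :
            ∃ y', y' ∉ rightPart v1 S ∧ Γ2.Adj v2 y' ∧ y' ≠ f2 := by
          by_cases hxf2 : x2 = f2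
          · exact ⟨y2, by simpa using hy2, hay2, fun h => hxy2 (hxf2.trans h.symm)⟩
          · exact ⟨x2, by simpa using hx2, hax2, hxf2⟩
        have hy'v : y' ≠ v2 := hay'.ne'
        have hgx : (Sum.inl ⟨x', hx'f⟩ : GlueV f1 f2 v2) ∉ S := fun h => hx'S (inl_mem_S h)
        have hgy : (Sum.inr ⟨y', hy'f, hy'v⟩ : GlueV f1 f2 v2) ∉ S := fun h => hy'S (inr_mem_S h)
        refine ⟨Sum.inl ⟨x', hx'f⟩, Sum.inr ⟨y', hy'f, hy'v⟩, by simpa using hgx,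
          by simpa using hgy, glue_adj_inl_inl.mpr hax', glue_adj_inl_inr.mpr ⟨hav, hay'⟩, ?_⟩
        intro r
        obtain ⟨h1A, -, -, -, -, -⟩ := conn_of_reach (Γ1 := Γ1) (Γ2 := Γ2) hne1 hne2 _ _ r
        simp only [glueA1, Set.mem_compl_iff, Finset.mem_coe, Finset.mem_insert, not_or] at h1A
        exact h1A.2 hv1S
      · have hxf : x ≠ f1 := fun h =>
          hav (leaf_nbr Γ1 hl1 ha1 (show Γ1.Adj f1 a.1 by have h2 := hax; rw [h] at h2; exact h2.symm))
        have hyf : y ≠ f1 := fun h =>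
          hav (leaf_nbr Γ1 hl1 ha1 (show Γ1.Adj f1 a.1 by have h2 := hay; rw [h] at h2; exact h2.symm))
        have hgx : (Sum.inl ⟨x, hxf⟩ : GlueV f1 f2 v2) ∉ S := fun h =>
          (by simpa using hx : x ∉ leftPart S) (inl_mem_S h)
        have hgy : (Sum.inl ⟨y, hyf⟩ : GlueV f1 f2 v2) ∉ S := fun h =>
          (by simpa using hy : y ∉ leftPart S) (inl_mem_S h)
        refine ⟨Sum.inl ⟨x, hxf⟩, Sum.inl ⟨y, hyf⟩, by simpa using hgx, by simpa using hgy,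
          glue_adj_inl_inl.mpr hax, glue_adj_inl_inl.mpr hay, ?_⟩
        intro r
        obtain ⟨hA1x, hA1y, rA⟩ := conn_of_reach (Γ1 := Γ1) (Γ2 := Γ2) hne1 hne2 _ _ r
        exact hnr (reach_erase_of_reach_insert Γ1 (leftPart S)
          (by simpa using hx) (by simpa using hy) hA1x hA1y rA)
    | inr b =>
      have hbS : b.1 ∈ rightPart v1 S := inr_mem_S hi
      rcases hc2 with he2 | ⟨-, hall2⟩
      · rw [he2] at hbS
        exact absurd hbS (Finset.notMem_empty _)
      obtain ⟨x, y, hx, hy, hax, hay, hnr⟩ :=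
        (numComp_erase_lt_iff Γ2 (rightPart v1 S) _ hbS).mp (hall2 _ hbS)
      have hxy : x ≠ y := fun h => hnr (reachOfEq (Subtype.ext h))
      have hxf : x ≠ f2 := fun h =>
        b.2.2 (leaf_nbr Γ2 hl2 ha2 (show Γ2.Adj f2 b.1 by have h2 := hax; rw [h] at h2; exact h2.symm))
      have hyf : y ≠ f2 := fun h =>
        b.2.2 (leaf_nbr Γ2 hl2 ha2 (show Γ2.Adj f2 b.1 by have h2 := hay; rw [h] at h2; exact h2.symm))
      by_cases hxv : x = v2 <;> by_cases hyv : y = v2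
      · exact absurd (hxv.trans hyv.symm) hxy
      · have hxnS2 : x ∉ rightPart v1 S := by simpa using hx
        have hv2nS : v2 ∉ rightPart v1 S := fun hm => hxnS2 (by rw [hxv]; exact hm)
        have hv1nS1 : v1 ∉ leftPart S := fun h => hv2nS (hiff0.mp h)
        have hgx : (Sum.inl ⟨v1, hne1⟩ : GlueV f1 f2 v2) ∉ S := fun h => hv1nS1 (inl_mem_S h)
        have hgy : (Sum.inr ⟨y, hyf, hyv⟩ : GlueV f1 f2 v2) ∉ S := fun h =>
          (by simpa using hy : y ∉ rightPart v1 S) (inr_mem_S h)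
        have hax' : Γ2.Adj b.1 v2 := by have h2 := hax; rw [hxv] at h2; exact h2
        refine ⟨Sum.inl ⟨v1, hne1⟩, Sum.inr ⟨y, hyf, hyv⟩, by simpa using hgx,
          by simpa using hgy, glue_adj_inr_inl.mpr ⟨rfl, hax'.symm⟩,
          glue_adj_inr_inr.mpr hay, ?_⟩
        intro r
        obtain ⟨-, h2A, -, hbA, -, r2⟩ := conn_of_reach (Γ1 := Γ1) (Γ2 := Γ2) hne1 hne2 _ _ r
        have rr := reach_erase_of_reach_insert Γ2 (rightPart v1 S)
          (by simpa using hv2nS) (by simpa using hy) h2A hbA r2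
        exact hnr (congrReach (Subtype.ext hxv.symm) rfl rr)
      · have hynS2 : y ∉ rightPart v1 S := by simpa using hy
        have hv2nS : v2 ∉ rightPart v1 S := fun hm => hynS2 (by rw [hyv]; exact hm)
        have hv1nS1 : v1 ∉ leftPart S := fun h => hv2nS (hiff0.mp h)
        have hgy : (Sum.inl ⟨v1, hne1⟩ : GlueV f1 f2 v2) ∉ S := fun h => hv1nS1 (inl_mem_S h)
        have hgx : (Sum.inr ⟨x, hxf, hxv⟩ : GlueV f1 f2 v2) ∉ S := fun h =>
          (by simpa using hx : x ∉ rightPart v1 S) (inr_mem_S h)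
        have hay' : Γ2.Adj b.1 v2 := by have h2 := hay; rw [hyv] at h2; exact h2
        refine ⟨Sum.inr ⟨x, hxf, hxv⟩, Sum.inl ⟨v1, hne1⟩, by simpa using hgx,
          by simpa using hgy, glue_adj_inr_inr.mpr hax,
          glue_adj_inr_inl.mpr ⟨rfl, hay'.symm⟩, ?_⟩
        intro r
        obtain ⟨-, h2A, haA, -, r2, -⟩ := conn_of_reach (Γ1 := Γ1) (Γ2 := Γ2) hne1 hne2 _ _ r
        have rr := reach_erase_of_reach_insert Γ2 (rightPart v1 S)
          (by simpa using hx) (by simpa using hv2nS) haA h2A r2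
        exact hnr (congrReach rfl (Subtype.ext hyv.symm) rr)
      · have hgx : (Sum.inr ⟨x, hxf, hxv⟩ : GlueV f1 f2 v2) ∉ S := fun h =>
          (by simpa using hx : x ∉ rightPart v1 S) (inr_mem_S h)
        have hgy : (Sum.inr ⟨y, hyf, hyv⟩ : GlueV f1 f2 v2) ∉ S := fun h =>
          (by simpa using hy : y ∉ rightPart v1 S) (inr_mem_S h)
        refine ⟨Sum.inr ⟨x, hxf, hxv⟩, Sum.inr ⟨y, hyf, hyv⟩, by simpa using hgx,
          by simpa using hgy, glue_adj_inr_inr.mpr hax, glue_adj_inr_inr.mpr hay, ?_⟩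
        intro r
        obtain ⟨haA, hbA, rA⟩ := conn_of_reach (Γ1 := Γ1) (Γ2 := Γ2) hne1 hne2 _ _ r
        exact hnr (reach_erase_of_reach_insert Γ2 (rightPart v1 S)
          (by simpa using hx) (by simpa using hy) haA hbA rA)
end

section
/- Let G = G_1 ∘ G_2 with identified vertex v, and let S ⊆ V(G) with S_i = S ∩ V(G_i). Then the number of connected components satisfies: c_G(S) = c_{G_1}(S_1) + c_{G_2}(S_2) − 1 if v ∉ S, and c_G(S) = c_{G_1}(S_1) + c_{G_2}(S_2) − 2 if v ∈ S. -/
open SimpleGraph Finset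

section CompHelpers
variable {V : Type*} {G : SimpleGraph V}

private lemma adj_const {β : Sort*} (f : V → β) (h : ∀ v w, G.Adj v w → f v = f w)
    {v w : V} (r : G.Reachable v w) : f v = f w := by
  obtain ⟨p⟩ := r
  induction p with
  | nil => rfl
  | cons a _ ih => exact (h _ _ a).trans ih

/-- Lift a vertex function constant on edges to connected components. -/
private def compLift {β : Sort*} (f : V → β) (h : ∀ v w, G.Adj v w → f v = f w) :
    G.ConnectedComponent → β :=
  Quot.lift f fun _ _ r => adj_const f h r

@[simp] private lemma compLift_mk {β : Sort*} (f : V → β)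
    (h : ∀ v w, G.Adj v w → f v = f w) (v : V) :
    compLift f h (G.connectedComponentMk v) = f v := rfl

private lemma uniqueNbr {v u w : V} [Fintype (G.neighborSet v)] (hd : G.degree v = 1)
    (hu : G.Adj v u) (hw : G.Adj v w) : w = u := by
  have h1 : (G.neighborFinset v).card = 1 := hd
  obtain ⟨a, ha⟩ := Finset.card_eq_one.mp h1
  have h2 : u ∈ G.neighborFinset v := by simpa using hu
  have h3 : w ∈ G.neighborFinset v := by simpa using hw
  rw [ha, Finset.mem_singleton] at h2 h3
  rw [h2, h3]

end CompHelpers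

private lemma card_union_lemma {α β γ : Type*} [Finite α] [Finite β] [Finite γ]
    (f : β → α) (g : γ → α) (hf : Function.Injective f) (hg : Function.Injective g)
    (hcov : ∀ a, (∃ b, f b = a) ∨ (∃ c, g c = a))
    (b0 : β) (c0 : γ) (h0 : f b0 = g c0)
    (hint : ∀ b c, f b = g c → f b = f b0) :
    Nat.card α + 1 = Nat.card β + Nat.card γ := by
  have hu : Set.range f ∪ Set.range g = Set.univ := by
    apply Set.eq_univ_of_forall
    intro a
    rcases hcov a with ⟨b, rfl⟩ | ⟨c, rfl⟩
    · exact Or.inl ⟨b, rfl⟩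
    · exact Or.inr ⟨c, rfl⟩
  have hi : Set.range f ∩ Set.range g = {f b0} := by
    apply Set.Subset.antisymm
    · rintro a ⟨⟨b, rfl⟩, ⟨c, hc⟩⟩
      exact (hint b c hc.symm)
    · rintro a (rfl : a = f b0)
      exact ⟨⟨b0, rfl⟩, ⟨c0, h0.symm⟩⟩
  have key := Set.ncard_union_add_ncard_inter (Set.range f) (Set.range g)
    (Set.toFinite _) (Set.toFinite _)
  rw [hu, hi, Set.ncard_univ, Set.ncard_singleton] at key
  have h1 : (Set.range f).ncard = Nat.card β := by
    rw [← Nat.card_coe_set_eq, Nat.card_range_of_injective hf]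
  have h2 : (Set.range g).ncard = Nat.card γ := by
    rw [← Nat.card_coe_set_eq, Nat.card_range_of_injective hg]
  omega

set_option linter.unusedSectionVars false

section MemLemmas

variable {V₁ V₂ : Type*} [DecidableEq V₁] [DecidableEq V₂] {f1 v1 : V₁} {f2 v2 : V₂}
  (S : Finset (GlueV f1 f2 v2))

private lemma mem_leftPart_iff (x : V₁) :
    x ∈ leftPart S ↔ ∃ h : x ≠ f1, Sum.inl ⟨x, h⟩ ∈ S := by
  constructor
  · intro hx
    rw [leftPart, Finset.mem_biUnion] at hx
    obtain ⟨z, hzS, hxz⟩ := hx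
    cases z with
    | inl a =>
      simp only [Finset.mem_singleton] at hxz
      subst hxz
      exact ⟨a.2, hzS⟩
    | inr b => simp at hxz
  · rintro ⟨h, hmem⟩
    rw [leftPart, Finset.mem_biUnion]
    exact ⟨Sum.inl ⟨x, h⟩, hmem, by simp⟩

private lemma mem_rightPart_iff (hne1 : v1 ≠ f1) (y : V₂) :
    y ∈ rightPart v1 S ↔
      ((y = v2 ∧ Sum.inl ⟨v1, hne1⟩ ∈ S) ∨ ∃ h : y ≠ f2 ∧ y ≠ v2, Sum.inr ⟨y, h⟩ ∈ S) := by
  constructor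
  · intro hy
    rw [rightPart, Finset.mem_biUnion] at hy
    obtain ⟨z, hzS, hyz⟩ := hy
    cases z with
    | inl a =>
      dsimp only at hyz
      by_cases hav : a.1 = v1
      · rw [if_pos hav, Finset.mem_singleton] at hyz
        left
        refine ⟨hyz, ?_⟩
        have : a = ⟨v1, hne1⟩ := Subtype.ext hav
        rwa [this] at hzS
      · rw [if_neg hav] at hyz
        simp at hyz
    | inr b =>
      simp only [Finset.mem_singleton] at hyz
      subst hyz
      exact Or.inr ⟨b.2, hzS⟩
  · rintro (⟨rfl, hmem⟩ | ⟨h, hmem⟩)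
    · rw [rightPart, Finset.mem_biUnion]
      exact ⟨Sum.inl ⟨v1, hne1⟩, hmem, by simp⟩
    · rw [rightPart, Finset.mem_biUnion]
      exact ⟨Sum.inr ⟨y, h⟩, hmem, by simp⟩

private lemma f1_not_mem_leftPart : f1 ∉ leftPart S := by
  rw [mem_leftPart_iff]
  rintro ⟨h, -⟩
  exact h rfl

private lemma f2_not_mem_rightPart (hne1 : v1 ≠ f1) (hne2 : v2 ≠ f2) :
    f2 ∉ rightPart v1 S := by
  rw [mem_rightPart_iff S hne1]
  rintro (⟨h, -⟩ | ⟨⟨h, -⟩, -⟩)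
  · exact hne2 h.symm
  · exact h rfl

private lemma mem_leftPart_inl (a : {x : V₁ // x ≠ f1}) :
    a.1 ∈ leftPart S ↔ Sum.inl a ∈ S := by
  rw [mem_leftPart_iff]
  constructor
  · rintro ⟨h, hm⟩
    exact hm
  · exact fun hm => ⟨a.2, hm⟩

private lemma mem_rightPart_inr (hne1 : v1 ≠ f1) (b : {x : V₂ // x ≠ f2 ∧ x ≠ v2}) :
    b.1 ∈ rightPart v1 S ↔ Sum.inr b ∈ S := by
  rw [mem_rightPart_iff S hne1]
  constructor
  · rintro (⟨h, -⟩ | ⟨h, hm⟩)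
    · exact absurd h b.2.2
    · exact hm
  · exact fun hm => Or.inr ⟨b.2, hm⟩

private lemma v2_mem_rightPart (hne1 : v1 ≠ f1) :
    v2 ∈ rightPart v1 S ↔ Sum.inl ⟨v1, hne1⟩ ∈ S := by
  rw [mem_rightPart_iff S hne1]
  constructor
  · rintro (⟨-, hm⟩ | ⟨⟨-, h⟩, -⟩)
    · exact hm
    · exact absurd rfl h
  · exact fun hm => Or.inl ⟨rfl, hm⟩

private lemma v1_mem_leftPart (hne1 : v1 ≠ f1) :
    v1 ∈ leftPart S ↔ Sum.inl ⟨v1, hne1⟩ ∈ S :=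
  mem_leftPart_inl S ⟨v1, hne1⟩

end MemLemmas

section AdjLemmas

variable {V₁ V₂ : Type*} (Γ1 : SimpleGraph V₁) (Γ2 : SimpleGraph V₂)
  (f1 v1 : V₁) (f2 v2 : V₂)

private lemma glue_adj_ll (a b : {x : V₁ // x ≠ f1}) :
    (glueGraph Γ1 Γ2 f1 v1 f2 v2).Adj (Sum.inl a) (Sum.inl b) ↔ Γ1.Adj a.1 b.1 := by
  rw [glueGraph, fromRel_adj]
  constructor
  · rintro ⟨-, h | h⟩
    · exact h
    · exact h.symm
  · intro h
    have hab : a ≠ b := fun hab => Γ1.loopless.irrefl _ (hab ▸ h)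
    exact ⟨fun hc => hab (Sum.inl_injective hc), Or.inl h⟩

private lemma glue_adj_rr (a b : {x : V₂ // x ≠ f2 ∧ x ≠ v2}) :
    (glueGraph Γ1 Γ2 f1 v1 f2 v2).Adj (Sum.inr a) (Sum.inr b) ↔ Γ2.Adj a.1 b.1 := by
  rw [glueGraph, fromRel_adj]
  constructor
  · rintro ⟨-, h | h⟩
    · exact h
    · exact h.symm
  · intro h
    have hab : a ≠ b := fun hab => Γ2.loopless.irrefl _ (hab ▸ h)
    exact ⟨fun hc => hab (Sum.inr_injective hc), Or.inl h⟩

private lemma glue_adj_lr (a : {x : V₁ // x ≠ f1}) (b : {x : V₂ // x ≠ f2 ∧ x ≠ v2}) :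
    (glueGraph Γ1 Γ2 f1 v1 f2 v2).Adj (Sum.inl a) (Sum.inr b) ↔ (a.1 = v1 ∧ Γ2.Adj v2 b.1) := by
  rw [glueGraph, fromRel_adj]
  constructor
  · rintro ⟨-, h | h⟩
    · exact h
    · exact h
  · intro h
    exact ⟨by simp, Or.inl h⟩

private lemma glue_adj_rl (b : {x : V₂ // x ≠ f2 ∧ x ≠ v2}) (a : {x : V₁ // x ≠ f1}) :
    (glueGraph Γ1 Γ2 f1 v1 f2 v2).Adj (Sum.inr b) (Sum.inl a) ↔ (a.1 = v1 ∧ Γ2.Adj v2 b.1) := by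
  rw [glueGraph, fromRel_adj]
  constructor
  · rintro ⟨-, h | h⟩
    · exact h
    · exact h
  · intro h
    exact ⟨by simp, Or.inl h⟩

end AdjLemmas
set_option linter.unusedSectionVars false

section MkDefs

variable {V₁ V₂ : Type*} [Fintype V₁] [DecidableEq V₁] [Fintype V₂] [DecidableEq V₂]

/-- The component of a vertex of the glued graph minus `S`. -/
private abbrev mkA (Γ1 : SimpleGraph V₁) (Γ2 : SimpleGraph V₂) {f1 : V₁} (v1 : V₁) {f2 v2 : V₂}
    (S : Finset (GlueV f1 f2 v2)) (z : GlueV f1 f2 v2) (hz : z ∉ S) :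
    ((glueGraph Γ1 Γ2 f1 v1 f2 v2).induce ((↑S : Set (GlueV f1 f2 v2))ᶜ)).ConnectedComponent :=
  SimpleGraph.connectedComponentMk _ ⟨z, by simpa using hz⟩

private abbrev mkB1 (Γ1 : SimpleGraph V₁) {f1 : V₁} {f2 v2 : V₂}
    (S : Finset (GlueV f1 f2 v2)) (x : V₁) (hx : x ∉ leftPart S) :
    (Γ1.induce ((↑(leftPart S) : Set V₁)ᶜ)).ConnectedComponent :=
  SimpleGraph.connectedComponentMk _ ⟨x, by simpa using hx⟩

private abbrev mkB2 (Γ2 : SimpleGraph V₂) (v1 : V₁) {f1 : V₁} {f2 v2 : V₂}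
    (S : Finset (GlueV f1 f2 v2)) (x : V₂) (hx : x ∉ rightPart v1 S) :
    (Γ2.induce ((↑(rightPart v1 S) : Set V₂)ᶜ)).ConnectedComponent :=
  SimpleGraph.connectedComponentMk _ ⟨x, by simpa using hx⟩

private lemma not_mem_of_compl {α : Type*} {S : Finset α} {x : α}
    (h : x ∈ (↑S : Set α)ᶜ) : x ∉ S := h

private lemma mk_eq_of_eq {V : Type*} {G : SimpleGraph V} {x y : V} (h : x = y) :
    G.connectedComponentMk x = G.connectedComponentMk y := by rw [h]

end MkDefs

/- ### Case 1 : `v ∉ S` -/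

section Case1

variable {V₁ V₂ : Type*} [Fintype V₁] [DecidableEq V₁] [Fintype V₂] [DecidableEq V₂]
  (Γ1 : SimpleGraph V₁) (Γ2 : SimpleGraph V₂)
  [DecidableRel Γ1.Adj] [DecidableRel Γ2.Adj]
  {f1 v1 : V₁} {f2 v2 : V₂}

private def psi1 (hl1 : Γ1.degree f1 = 1) (ha1 : Γ1.Adj f1 v1)
    {hne1 : v1 ≠ f1} {S : Finset (GlueV f1 f2 v2)} (hv : Sum.inl ⟨v1, hne1⟩ ∉ S) :
    (Γ1.induce ((↑(leftPart S) : Set V₁)ᶜ)).ConnectedComponent →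
    ((glueGraph Γ1 Γ2 f1 v1 f2 v2).induce
      ((↑S : Set (GlueV f1 f2 v2))ᶜ)).ConnectedComponent :=
  compLift
    (fun x =>
      if h : (x : V₁) = f1 then mkA Γ1 Γ2 v1 S (Sum.inl ⟨v1, hne1⟩) hv
      else mkA Γ1 Γ2 v1 S (Sum.inl ⟨(x : V₁), h⟩)
        (fun hc => (not_mem_of_compl x.2)
          ((mem_leftPart_inl S ⟨(x : V₁), h⟩).mpr hc)))
    (by
      intro x y hadj
      beta_reduce
      have ha : Γ1.Adj x.1 y.1 := hadj
      by_cases hx : (x : V₁) = f1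
      · have hy1 : (y : V₁) = v1 := uniqueNbr hl1 ha1 (by rwa [hx] at ha)
        have hy : (y : V₁) ≠ f1 := by rw [hy1]; exact hne1
        rw [dif_pos hx, dif_neg hy]
        exact mk_eq_of_eq (by exact Subtype.ext (congrArg Sum.inl (Subtype.ext hy1.symm)))
      · by_cases hy : (y : V₁) = f1
        · have hx1 : (x : V₁) = v1 := uniqueNbr hl1 ha1 (by rw [hy] at ha; exact ha.symm)
          rw [dif_neg hx, dif_pos hy]
          exact mk_eq_of_eq (by exact Subtype.ext (congrArg Sum.inl (Subtype.ext hx1)))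
        · rw [dif_neg hx, dif_neg hy]
          exact ConnectedComponent.connectedComponentMk_eq_of_adj
            ((glue_adj_ll Γ1 Γ2 f1 v1 f2 v2 ⟨x.1, hx⟩ ⟨y.1, hy⟩).mpr ha))

private def psi2 (hl2 : Γ2.degree f2 = 1) (ha2 : Γ2.Adj f2 v2)
    {hne1 : v1 ≠ f1} {S : Finset (GlueV f1 f2 v2)} (hv : Sum.inl ⟨v1, hne1⟩ ∉ S) :
    (Γ2.induce ((↑(rightPart v1 S) : Set V₂)ᶜ)).ConnectedComponent →
    ((glueGraph Γ1 Γ2 f1 v1 f2 v2).induce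
      ((↑S : Set (GlueV f1 f2 v2))ᶜ)).ConnectedComponent :=
  compLift
    (fun y =>
      if h : (y : V₂) = f2 ∨ (y : V₂) = v2 then mkA Γ1 Γ2 v1 S (Sum.inl ⟨v1, hne1⟩) hv
      else mkA Γ1 Γ2 v1 S (Sum.inr ⟨(y : V₂), not_or.mp h⟩)
        (fun hc => (not_mem_of_compl y.2)
          ((mem_rightPart_inr S hne1 ⟨(y : V₂), not_or.mp h⟩).mpr hc)))
    (by
      have key : ∀ (x y : ↥((↑(rightPart v1 S) : Set V₂)ᶜ)), Γ2.Adj x.1 y.1 →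
          ((x : V₂) = f2 ∨ (x : V₂) = v2) → ¬((y : V₂) = f2 ∨ (y : V₂) = v2) →
          (if h : (x : V₂) = f2 ∨ (x : V₂) = v2 then
              mkA Γ1 Γ2 v1 S (Sum.inl ⟨v1, hne1⟩) hv
            else mkA Γ1 Γ2 v1 S (Sum.inr ⟨(x : V₂), not_or.mp h⟩)
              (fun hc => (not_mem_of_compl x.2)
                ((mem_rightPart_inr S hne1 ⟨(x : V₂), not_or.mp h⟩).mpr hc))) =
          (if h : (y : V₂) = f2 ∨ (y : V₂) = v2 then
              mkA Γ1 Γ2 v1 S (Sum.inl ⟨v1, hne1⟩) hv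
            else mkA Γ1 Γ2 v1 S (Sum.inr ⟨(y : V₂), not_or.mp h⟩)
              (fun hc => (not_mem_of_compl y.2)
                ((mem_rightPart_inr S hne1 ⟨(y : V₂), not_or.mp h⟩).mpr hc))) := by
        intro x y ha hx hy
        rw [dif_pos hx, dif_neg hy]
        have hx2 : (x : V₂) = v2 := by
          rcases hx with hx | hx
          · exact absurd (uniqueNbr hl2 ha2 (by rwa [hx] at ha)) (fun hc => hy (Or.inr hc))
          · exact hx
        exact ConnectedComponent.connectedComponentMk_eq_of_adj
          ((glue_adj_lr Γ1 Γ2 f1 v1 f2 v2 ⟨v1, hne1⟩ ⟨y.1, not_or.mp hy⟩).mpr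
            ⟨rfl, by rwa [hx2] at ha⟩)
      intro x y hadj
      beta_reduce
      have ha : Γ2.Adj x.1 y.1 := hadj
      by_cases hx : (x : V₂) = f2 ∨ (x : V₂) = v2
      · by_cases hy : (y : V₂) = f2 ∨ (y : V₂) = v2
        · rw [dif_pos hx, dif_pos hy]
        · exact key x y ha hx hy
      · by_cases hy : (y : V₂) = f2 ∨ (y : V₂) = v2
        · exact (key y x ha.symm hy hx).symm
        · rw [dif_neg hx, dif_neg hy]
          exact ConnectedComponent.connectedComponentMk_eq_of_adj
            ((glue_adj_rr Γ1 Γ2 f1 v1 f2 v2 ⟨x.1, not_or.mp hx⟩ ⟨y.1, not_or.mp hy⟩).mpr ha))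

private def rho1 {hne1 : v1 ≠ f1} {S : Finset (GlueV f1 f2 v2)}
    (hv : Sum.inl ⟨v1, hne1⟩ ∉ S) :
    ((glueGraph Γ1 Γ2 f1 v1 f2 v2).induce
      ((↑S : Set (GlueV f1 f2 v2))ᶜ)).ConnectedComponent →
    (Γ1.induce ((↑(leftPart S) : Set V₁)ᶜ)).ConnectedComponent :=
  compLift
    (fun z => Sum.elim
      (fun (a : {x : V₁ // x ≠ f1}) =>
        if h : a.1 ∈ leftPart S then
          mkB1 Γ1 S v1 (fun hc => hv ((v1_mem_leftPart S hne1).mp hc))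
        else mkB1 Γ1 S a.1 h)
      (fun _ => mkB1 Γ1 S v1 (fun hc => hv ((v1_mem_leftPart S hne1).mp hc)))
      z.1)
    (by
      rintro ⟨(a | b), hz⟩ ⟨(c | d), hw⟩ hadj
      · have ha : Γ1.Adj a.1 c.1 := (glue_adj_ll Γ1 Γ2 f1 v1 f2 v2 a c).mp hadj
        have hza : a.1 ∉ leftPart S := fun hc =>
          (not_mem_of_compl hz) ((mem_leftPart_inl S a).mp hc)
        have hwc : c.1 ∉ leftPart S := fun hc =>
          (not_mem_of_compl hw) ((mem_leftPart_inl S c).mp hc)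
        beta_reduce
        simp only [Sum.elim_inl]
        rw [dif_neg hza, dif_neg hwc]
        exact ConnectedComponent.connectedComponentMk_eq_of_adj ha
      · have h1 : a.1 = v1 := ((glue_adj_lr Γ1 Γ2 f1 v1 f2 v2 a d).mp hadj).1
        have hza : a.1 ∉ leftPart S := fun hc =>
          (not_mem_of_compl hz) ((mem_leftPart_inl S a).mp hc)
        beta_reduce
        simp only [Sum.elim_inl, Sum.elim_inr]
        rw [dif_neg hza]
        exact mk_eq_of_eq (Subtype.ext h1)
      · have h1 : c.1 = v1 := ((glue_adj_rl Γ1 Γ2 f1 v1 f2 v2 b c).mp hadj).1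
        have hwc : c.1 ∉ leftPart S := fun hc =>
          (not_mem_of_compl hw) ((mem_leftPart_inl S c).mp hc)
        beta_reduce
        simp only [Sum.elim_inl, Sum.elim_inr]
        rw [dif_neg hwc]
        exact mk_eq_of_eq (Subtype.ext h1.symm)
      · rfl)

private def rho2 {hne1 : v1 ≠ f1} {S : Finset (GlueV f1 f2 v2)}
    (hv : Sum.inl ⟨v1, hne1⟩ ∉ S) :
    ((glueGraph Γ1 Γ2 f1 v1 f2 v2).induce
      ((↑S : Set (GlueV f1 f2 v2))ᶜ)).ConnectedComponent →
    (Γ2.induce ((↑(rightPart v1 S) : Set V₂)ᶜ)).ConnectedComponent :=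
  compLift
    (fun z => Sum.elim
      (fun (_ : {x : V₁ // x ≠ f1}) =>
        mkB2 Γ2 v1 S v2 (fun hc => hv ((v2_mem_rightPart S hne1).mp hc)))
      (fun (b : {x : V₂ // x ≠ f2 ∧ x ≠ v2}) =>
        if h : b.1 ∈ rightPart v1 S then
          mkB2 Γ2 v1 S v2 (fun hc => hv ((v2_mem_rightPart S hne1).mp hc))
        else mkB2 Γ2 v1 S b.1 h)
      z.1)
    (by
      rintro ⟨(a | b), hz⟩ ⟨(c | d), hw⟩ hadj
      · rfl
      · have h1 := (glue_adj_lr Γ1 Γ2 f1 v1 f2 v2 a d).mp hadj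
        have hwd : d.1 ∉ rightPart v1 S := fun hc =>
          (not_mem_of_compl hw) ((mem_rightPart_inr S hne1 d).mp hc)
        beta_reduce
        simp only [Sum.elim_inl, Sum.elim_inr]
        rw [dif_neg hwd]
        exact ConnectedComponent.connectedComponentMk_eq_of_adj h1.2
      · have h1 := (glue_adj_rl Γ1 Γ2 f1 v1 f2 v2 b c).mp hadj
        have hzb : b.1 ∉ rightPart v1 S := fun hc =>
          (not_mem_of_compl hz) ((mem_rightPart_inr S hne1 b).mp hc)
        beta_reduce
        simp only [Sum.elim_inl, Sum.elim_inr]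
        rw [dif_neg hzb]
        exact ConnectedComponent.connectedComponentMk_eq_of_adj h1.2.symm
      · have h1 : Γ2.Adj b.1 d.1 := (glue_adj_rr Γ1 Γ2 f1 v1 f2 v2 b d).mp hadj
        have hzb : b.1 ∉ rightPart v1 S := fun hc =>
          (not_mem_of_compl hz) ((mem_rightPart_inr S hne1 b).mp hc)
        have hwd : d.1 ∉ rightPart v1 S := fun hc =>
          (not_mem_of_compl hw) ((mem_rightPart_inr S hne1 d).mp hc)
        beta_reduce
        simp only [Sum.elim_inr]
        rw [dif_neg hzb, dif_neg hwd]
        exact ConnectedComponent.connectedComponentMk_eq_of_adj h1)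

end Case1
section Case1Count

variable {V₁ V₂ : Type*} [Fintype V₁] [DecidableEq V₁] [Fintype V₂] [DecidableEq V₂]
  (Γ1 : SimpleGraph V₁) (Γ2 : SimpleGraph V₂)
  [DecidableRel Γ1.Adj] [DecidableRel Γ2.Adj]
  {f1 v1 : V₁} {f2 v2 : V₂}

private lemma case1_count (hl1 : Γ1.degree f1 = 1) (ha1 : Γ1.Adj f1 v1)
    (hl2 : Γ2.degree f2 = 1) (ha2 : Γ2.Adj f2 v2)
    {hne1 : v1 ≠ f1} {S : Finset (GlueV f1 f2 v2)} (hv : Sum.inl ⟨v1, hne1⟩ ∉ S) :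
    Nat.card ((glueGraph Γ1 Γ2 f1 v1 f2 v2).induce
        ((↑S : Set (GlueV f1 f2 v2))ᶜ)).ConnectedComponent + 1 =
      Nat.card (Γ1.induce ((↑(leftPart S) : Set V₁)ᶜ)).ConnectedComponent +
      Nat.card (Γ2.induce ((↑(rightPart v1 S) : Set V₂)ᶜ)).ConnectedComponent := by
  have hv1 : v1 ∉ leftPart S := fun hc => hv ((v1_mem_leftPart S hne1).mp hc)
  have hv2 : v2 ∉ rightPart v1 S := fun hc => hv ((v2_mem_rightPart S hne1).mp hc)
  have hf1c : f1 ∈ (↑(leftPart S) : Set V₁)ᶜ := f1_not_mem_leftPart S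
  -- left inverse for psi1
  have hli1 : ∀ b, rho1 Γ1 Γ2 hv (psi1 Γ1 Γ2 hl1 ha1 hv b) = b := by
    refine SimpleGraph.ConnectedComponent.ind ?_
    intro x
    by_cases hx : (x : V₁) = f1
    · simp only [psi1, compLift_mk, dif_pos hx, rho1, mkA, mkB1, compLift_mk,
        Sum.elim_inl, dif_neg hv1]
      have hxeq : x = ⟨f1, hf1c⟩ := Subtype.ext hx
      rw [hxeq]
      exact ConnectedComponent.connectedComponentMk_eq_of_adj
        (ha1.symm : Γ1.Adj v1 f1)
    · simp only [psi1, compLift_mk, dif_neg hx, rho1, mkA, mkB1, compLift_mk, Sum.elim_inl,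
        dif_neg (not_mem_of_compl x.2)]
  -- left inverse for psi2
  have hli2 : ∀ c, rho2 Γ1 Γ2 hv (psi2 Γ1 Γ2 hl2 ha2 hv c) = c := by
    refine SimpleGraph.ConnectedComponent.ind ?_
    intro y
    by_cases hy : (y : V₂) = f2 ∨ (y : V₂) = v2
    · simp only [psi2, compLift_mk, dif_pos hy, rho2, mkA, mkB2, compLift_mk, Sum.elim_inl]
      have hy2c : (y : V₂) ∈ (↑(rightPart v1 S) : Set V₂)ᶜ := y.2
      rcases hy with hy | hy
      · exact ConnectedComponent.connectedComponentMk_eq_of_adj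
          (show Γ2.Adj v2 (y : V₂) by rw [hy]; exact ha2.symm)
      · exact mk_eq_of_eq (Subtype.ext hy.symm)
    · simp only [psi2, compLift_mk, dif_neg hy, rho2, mkA, mkB2, compLift_mk, Sum.elim_inr,
        dif_neg (not_mem_of_compl y.2)]
  -- coverage
  have hcov : ∀ a, (∃ b, psi1 Γ1 Γ2 hl1 ha1 hv b = a) ∨ (∃ c, psi2 Γ1 Γ2 hl2 ha2 hv c = a) := by
    refine SimpleGraph.ConnectedComponent.ind ?_
    rintro ⟨(a | b), hz⟩
    · left
      refine ⟨mkB1 Γ1 S a.1 (fun hc => not_mem_of_compl hz ((mem_leftPart_inl S a).mp hc)), ?_⟩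
      simp only [psi1, mkB1, compLift_mk, dif_neg (a.2 : ¬(a.1 = f1))]
    · right
      refine ⟨mkB2 Γ2 v1 S b.1
        (fun hc => not_mem_of_compl hz ((mem_rightPart_inr S hne1 b).mp hc)), ?_⟩
      simp only [psi2, mkB2, compLift_mk,
        dif_neg (show ¬(b.1 = f2 ∨ b.1 = v2) from fun h => h.elim b.2.1 b.2.2)]
  -- the common component
  have h0 : psi1 Γ1 Γ2 hl1 ha1 hv (mkB1 Γ1 S v1 hv1) = psi2 Γ1 Γ2 hl2 ha2 hv (mkB2 Γ2 v1 S v2 hv2) := by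
    simp only [psi1, psi2, mkB1, mkB2, compLift_mk, dif_neg (hne1 : ¬(v1 = f1))]
    rw [dif_pos (show v2 = f2 ∨ True from Or.inr trivial)]
  -- intersection
  have hrho : ∀ c, rho1 Γ1 Γ2 hv (psi2 Γ1 Γ2 hl2 ha2 hv c) = mkB1 Γ1 S v1 hv1 := by
    refine SimpleGraph.ConnectedComponent.ind ?_
    intro y
    by_cases hy : (y : V₂) = f2 ∨ (y : V₂) = v2
    · simp only [psi2, compLift_mk, dif_pos hy, rho1, mkA, mkB1, compLift_mk,
        Sum.elim_inl, dif_neg hv1]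
    · simp only [psi2, compLift_mk, dif_neg hy, rho1, mkA, mkB1, compLift_mk, Sum.elim_inr]
  have hint : ∀ b c, psi1 Γ1 Γ2 hl1 ha1 hv b = psi2 Γ1 Γ2 hl2 ha2 hv c →
      psi1 Γ1 Γ2 hl1 ha1 hv b = psi1 Γ1 Γ2 hl1 ha1 hv (mkB1 Γ1 S v1 hv1) := by
    intro b c hbc
    have h1 : b = mkB1 Γ1 S v1 hv1 := by
      rw [← hli1 b, hbc, hrho c]
    rw [h1]
  exact card_union_lemma _ _
    (Function.LeftInverse.injective hli1) (Function.LeftInverse.injective hli2)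
    hcov (mkB1 Γ1 S v1 hv1) (mkB2 Γ2 v1 S v2 hv2) h0 hint

end Case1Count
/- ### Case 2 : `v ∈ S` -/

section Case2

variable {V₁ V₂ : Type*} [Fintype V₁] [DecidableEq V₁] [Fintype V₂] [DecidableEq V₂]
  (Γ1 : SimpleGraph V₁) (Γ2 : SimpleGraph V₂)
  [DecidableRel Γ1.Adj] [DecidableRel Γ2.Adj]
  {f1 v1 : V₁} {f2 v2 : V₂}

private def psi1' (hl1 : Γ1.degree f1 = 1) (ha1 : Γ1.Adj f1 v1)
    {hne1 : v1 ≠ f1} {S : Finset (GlueV f1 f2 v2)} (hv : Sum.inl ⟨v1, hne1⟩ ∈ S) :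
    (Γ1.induce ((↑(leftPart S) : Set V₁)ᶜ)).ConnectedComponent →
    Option ((glueGraph Γ1 Γ2 f1 v1 f2 v2).induce
      ((↑S : Set (GlueV f1 f2 v2))ᶜ)).ConnectedComponent :=
  compLift
    (fun x =>
      if h : (x : V₁) = f1 then none
      else some (mkA Γ1 Γ2 v1 S (Sum.inl ⟨(x : V₁), h⟩)
        (fun hc => (not_mem_of_compl x.2) ((mem_leftPart_inl S ⟨(x : V₁), h⟩).mpr hc))))
    (by
      intro x y hadj
      beta_reduce
      have ha : Γ1.Adj x.1 y.1 := hadj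
      have hv1 : v1 ∈ leftPart S := (v1_mem_leftPart S hne1).mpr hv
      by_cases hx : (x : V₁) = f1
      · have hy1 : (y : V₁) = v1 := uniqueNbr hl1 ha1 (by rwa [hx] at ha)
        exact absurd (show (y : V₁) ∈ leftPart S by rw [hy1]; exact hv1)
          (not_mem_of_compl y.2)
      · by_cases hy : (y : V₁) = f1
        · have hx1 : (x : V₁) = v1 := uniqueNbr hl1 ha1 (by rw [hy] at ha; exact ha.symm)
          exact absurd (show (x : V₁) ∈ leftPart S by rw [hx1]; exact hv1)
            (not_mem_of_compl x.2)
        · rw [dif_neg hx, dif_neg hy]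
          exact congrArg some (ConnectedComponent.connectedComponentMk_eq_of_adj
            ((glue_adj_ll Γ1 Γ2 f1 v1 f2 v2 ⟨x.1, hx⟩ ⟨y.1, hy⟩).mpr ha)))

private def psi2' (hl2 : Γ2.degree f2 = 1) (ha2 : Γ2.Adj f2 v2)
    {hne1 : v1 ≠ f1} {S : Finset (GlueV f1 f2 v2)} (hv : Sum.inl ⟨v1, hne1⟩ ∈ S) :
    (Γ2.induce ((↑(rightPart v1 S) : Set V₂)ᶜ)).ConnectedComponent →
    Option ((glueGraph Γ1 Γ2 f1 v1 f2 v2).induce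
      ((↑S : Set (GlueV f1 f2 v2))ᶜ)).ConnectedComponent :=
  compLift
    (fun y =>
      if h : (y : V₂) = f2 then none
      else some (mkA Γ1 Γ2 v1 S
        (Sum.inr ⟨(y : V₂), ⟨h, fun hc => (not_mem_of_compl y.2)
          (by rw [hc]; exact (v2_mem_rightPart S hne1).mpr hv)⟩⟩)
        (fun hc => (not_mem_of_compl y.2) ((mem_rightPart_inr S hne1 _).mpr hc))))
    (by
      intro x y hadj
      beta_reduce
      have ha : Γ2.Adj x.1 y.1 := hadj
      have hv2 : v2 ∈ rightPart v1 S := (v2_mem_rightPart S hne1).mpr hv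
      by_cases hx : (x : V₂) = f2
      · have hy1 : (y : V₂) = v2 := uniqueNbr hl2 ha2 (by rwa [hx] at ha)
        exact absurd (show (y : V₂) ∈ rightPart v1 S by rw [hy1]; exact hv2)
          (not_mem_of_compl y.2)
      · by_cases hy : (y : V₂) = f2
        · have hx1 : (x : V₂) = v2 := uniqueNbr hl2 ha2 (by rw [hy] at ha; exact ha.symm)
          exact absurd (show (x : V₂) ∈ rightPart v1 S by rw [hx1]; exact hv2)
            (not_mem_of_compl x.2)
        · rw [dif_neg hx, dif_neg hy]
          exact congrArg some (ConnectedComponent.connectedComponentMk_eq_of_adj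
            ((glue_adj_rr Γ1 Γ2 f1 v1 f2 v2 ⟨x.1, _⟩ ⟨y.1, _⟩).mpr ha)))

private def rhoA1 {hne1 : v1 ≠ f1} {S : Finset (GlueV f1 f2 v2)}
    (hv : Sum.inl ⟨v1, hne1⟩ ∈ S) :
    ((glueGraph Γ1 Γ2 f1 v1 f2 v2).induce
      ((↑S : Set (GlueV f1 f2 v2))ᶜ)).ConnectedComponent →
    (Γ1.induce ((↑(leftPart S) : Set V₁)ᶜ)).ConnectedComponent :=
  compLift
    (fun z => Sum.elim
      (fun (a : {x : V₁ // x ≠ f1}) =>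
        if h : a.1 ∈ leftPart S then mkB1 Γ1 S f1 (f1_not_mem_leftPart S)
        else mkB1 Γ1 S a.1 h)
      (fun _ => mkB1 Γ1 S f1 (f1_not_mem_leftPart S))
      z.1)
    (by
      rintro ⟨(a | b), hz⟩ ⟨(c | d), hw⟩ hadj
      · have ha : Γ1.Adj a.1 c.1 := (glue_adj_ll Γ1 Γ2 f1 v1 f2 v2 a c).mp hadj
        have hza : a.1 ∉ leftPart S := fun hc =>
          (not_mem_of_compl hz) ((mem_leftPart_inl S a).mp hc)
        have hwc : c.1 ∉ leftPart S := fun hc =>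
          (not_mem_of_compl hw) ((mem_leftPart_inl S c).mp hc)
        beta_reduce
        simp only [Sum.elim_inl]
        rw [dif_neg hza, dif_neg hwc]
        exact ConnectedComponent.connectedComponentMk_eq_of_adj ha
      · have h1 : a.1 = v1 := ((glue_adj_lr Γ1 Γ2 f1 v1 f2 v2 a d).mp hadj).1
        exact absurd (show Sum.inl a ∈ S by rw [show a = ⟨v1, hne1⟩ from Subtype.ext h1]; exact hv)
          (not_mem_of_compl hz)
      · have h1 : c.1 = v1 := ((glue_adj_rl Γ1 Γ2 f1 v1 f2 v2 b c).mp hadj).1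
        exact absurd (show Sum.inl c ∈ S by rw [show c = ⟨v1, hne1⟩ from Subtype.ext h1]; exact hv)
          (not_mem_of_compl hw)
      · rfl)

private def rhoA2 {hne1 : v1 ≠ f1} (hne2 : v2 ≠ f2) {S : Finset (GlueV f1 f2 v2)}
    (hv : Sum.inl ⟨v1, hne1⟩ ∈ S) :
    ((glueGraph Γ1 Γ2 f1 v1 f2 v2).induce
      ((↑S : Set (GlueV f1 f2 v2))ᶜ)).ConnectedComponent →
    (Γ2.induce ((↑(rightPart v1 S) : Set V₂)ᶜ)).ConnectedComponent :=
  compLift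
    (fun z => Sum.elim
      (fun (_ : {x : V₁ // x ≠ f1}) => mkB2 Γ2 v1 S f2 (f2_not_mem_rightPart S hne1 hne2))
      (fun (b : {x : V₂ // x ≠ f2 ∧ x ≠ v2}) =>
        if h : b.1 ∈ rightPart v1 S then mkB2 Γ2 v1 S f2 (f2_not_mem_rightPart S hne1 hne2)
        else mkB2 Γ2 v1 S b.1 h)
      z.1)
    (by
      rintro ⟨(a | b), hz⟩ ⟨(c | d), hw⟩ hadj
      · rfl
      · have h1 : a.1 = v1 := ((glue_adj_lr Γ1 Γ2 f1 v1 f2 v2 a d).mp hadj).1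
        exact absurd (show Sum.inl a ∈ S by rw [show a = ⟨v1, hne1⟩ from Subtype.ext h1]; exact hv)
          (not_mem_of_compl hz)
      · have h1 : c.1 = v1 := ((glue_adj_rl Γ1 Γ2 f1 v1 f2 v2 b c).mp hadj).1
        exact absurd (show Sum.inl c ∈ S by rw [show c = ⟨v1, hne1⟩ from Subtype.ext h1]; exact hv)
          (not_mem_of_compl hw)
      · have h1 : Γ2.Adj b.1 d.1 := (glue_adj_rr Γ1 Γ2 f1 v1 f2 v2 b d).mp hadj
        have hzb : b.1 ∉ rightPart v1 S := fun hc =>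
          (not_mem_of_compl hz) ((mem_rightPart_inr S hne1 b).mp hc)
        have hwd : d.1 ∉ rightPart v1 S := fun hc =>
          (not_mem_of_compl hw) ((mem_rightPart_inr S hne1 d).mp hc)
        beta_reduce
        simp only [Sum.elim_inr]
        rw [dif_neg hzb, dif_neg hwd]
        exact ConnectedComponent.connectedComponentMk_eq_of_adj h1)

private def chi {hne1 : v1 ≠ f1} {S : Finset (GlueV f1 f2 v2)}
    (hv : Sum.inl ⟨v1, hne1⟩ ∈ S) :
    ((glueGraph Γ1 Γ2 f1 v1 f2 v2).induce
      ((↑S : Set (GlueV f1 f2 v2))ᶜ)).ConnectedComponent → Bool :=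
  compLift (fun z => z.1.isLeft)
    (by
      rintro ⟨(a | b), hz⟩ ⟨(c | d), hw⟩ hadj
      · rfl
      · have h1 : a.1 = v1 := ((glue_adj_lr Γ1 Γ2 f1 v1 f2 v2 a d).mp hadj).1
        exact absurd (show Sum.inl a ∈ S by rw [show a = ⟨v1, hne1⟩ from Subtype.ext h1]; exact hv)
          (not_mem_of_compl hz)
      · have h1 : c.1 = v1 := ((glue_adj_rl Γ1 Γ2 f1 v1 f2 v2 b c).mp hadj).1
        exact absurd (show Sum.inl c ∈ S by rw [show c = ⟨v1, hne1⟩ from Subtype.ext h1]; exact hv)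
          (not_mem_of_compl hw)
      · rfl)

end Case2
section Case2Count

variable {V₁ V₂ : Type*} [Fintype V₁] [DecidableEq V₁] [Fintype V₂] [DecidableEq V₂]
  (Γ1 : SimpleGraph V₁) (Γ2 : SimpleGraph V₂)
  [DecidableRel Γ1.Adj] [DecidableRel Γ2.Adj]
  {f1 v1 : V₁} {f2 v2 : V₂}

private lemma case2_count (hl1 : Γ1.degree f1 = 1) (ha1 : Γ1.Adj f1 v1)
    (hl2 : Γ2.degree f2 = 1) (ha2 : Γ2.Adj f2 v2)
    {hne1 : v1 ≠ f1} (hne2 : v2 ≠ f2)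
    {S : Finset (GlueV f1 f2 v2)} (hv : Sum.inl ⟨v1, hne1⟩ ∈ S) :
    Nat.card ((glueGraph Γ1 Γ2 f1 v1 f2 v2).induce
        ((↑S : Set (GlueV f1 f2 v2))ᶜ)).ConnectedComponent + 2 =
      Nat.card (Γ1.induce ((↑(leftPart S) : Set V₁)ᶜ)).ConnectedComponent +
      Nat.card (Γ2.induce ((↑(rightPart v1 S) : Set V₂)ᶜ)).ConnectedComponent := by
  have hf1 : f1 ∉ leftPart S := f1_not_mem_leftPart S
  have hf2 : f2 ∉ rightPart v1 S := f2_not_mem_rightPart S hne1 hne2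
  -- left inverse for psi1'
  have hli1 : ∀ b, Option.elim (psi1' Γ1 Γ2 hl1 ha1 hv b)
      (mkB1 Γ1 S f1 hf1) (rhoA1 Γ1 Γ2 hv) = b := by
    refine SimpleGraph.ConnectedComponent.ind ?_
    intro x
    by_cases hx : (x : V₁) = f1
    · simp only [psi1', compLift_mk, dif_pos hx, Option.elim]
      exact mk_eq_of_eq (Subtype.ext hx.symm)
    · simp only [psi1', compLift_mk, dif_neg hx, Option.elim, rhoA1, mkA, mkB1,
        compLift_mk, Sum.elim_inl, dif_neg (not_mem_of_compl x.2)]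
  have hli2 : ∀ c, Option.elim (psi2' Γ1 Γ2 hl2 ha2 hv c)
      (mkB2 Γ2 v1 S f2 hf2) (rhoA2 Γ1 Γ2 hne2 hv) = c := by
    refine SimpleGraph.ConnectedComponent.ind ?_
    intro y
    by_cases hy : (y : V₂) = f2
    · simp only [psi2', compLift_mk, dif_pos hy, Option.elim]
      exact mk_eq_of_eq (Subtype.ext hy.symm)
    · simp only [psi2', compLift_mk, dif_neg hy, Option.elim, rhoA2, mkA, mkB2,
        compLift_mk, Sum.elim_inr, dif_neg (not_mem_of_compl y.2)]
  have hinj1 : Function.Injective (psi1' Γ1 Γ2 hl1 ha1 hv) := by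
    intro b b' h
    rw [← hli1 b, ← hli1 b', h]
  have hinj2 : Function.Injective (psi2' Γ1 Γ2 hl2 ha2 hv) := by
    intro c c' h
    rw [← hli2 c, ← hli2 c', h]
  -- coverage
  have hcov : ∀ o, (∃ b, psi1' Γ1 Γ2 hl1 ha1 hv b = o) ∨
      (∃ c, psi2' Γ1 Γ2 hl2 ha2 hv c = o) := by
    intro o
    cases o with
    | none =>
      left
      exact ⟨mkB1 Γ1 S f1 hf1, by simp only [psi1', mkB1, compLift_mk, dif_pos]⟩
    | some a =>
      induction a using SimpleGraph.ConnectedComponent.ind with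
      | _ z =>
        obtain ⟨(a | b), hz⟩ := z
        · left
          exact ⟨mkB1 Γ1 S a.1 (fun hc => not_mem_of_compl hz ((mem_leftPart_inl S a).mp hc)),
            by simp only [psi1', mkB1, compLift_mk, dif_neg (a.2 : ¬(a.1 = f1))]⟩
        · right
          exact ⟨mkB2 Γ2 v1 S b.1
              (fun hc => not_mem_of_compl hz ((mem_rightPart_inr S hne1 b).mp hc)),
            by simp only [psi2', mkB2, compLift_mk, dif_neg (b.2.1 : ¬(b.1 = f2))]⟩
  -- both hit `none`
  have h0 : psi1' Γ1 Γ2 hl1 ha1 hv (mkB1 Γ1 S f1 hf1) =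
      psi2' Γ1 Γ2 hl2 ha2 hv (mkB2 Γ2 v1 S f2 hf2) := by
    simp only [psi1', psi2', mkB1, mkB2, compLift_mk, dif_pos]
  have h0' : psi1' Γ1 Γ2 hl1 ha1 hv (mkB1 Γ1 S f1 hf1) = none := by
    simp only [psi1', mkB1, compLift_mk, dif_pos]
  -- classification
  have h1 : ∀ b, psi1' Γ1 Γ2 hl1 ha1 hv b = none ∨
      ∃ a, psi1' Γ1 Γ2 hl1 ha1 hv b = some a ∧ chi Γ1 Γ2 hv a = true := by
    refine SimpleGraph.ConnectedComponent.ind ?_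
    intro x
    by_cases hx : (x : V₁) = f1
    · left; simp only [psi1', compLift_mk, dif_pos hx]
    · right
      refine ⟨_, by simp only [psi1', compLift_mk, dif_neg hx]; rfl, ?_⟩
      simp only [chi, mkA, compLift_mk]
      rfl
  have h2 : ∀ c, psi2' Γ1 Γ2 hl2 ha2 hv c = none ∨
      ∃ a, psi2' Γ1 Γ2 hl2 ha2 hv c = some a ∧ chi Γ1 Γ2 hv a = false := by
    refine SimpleGraph.ConnectedComponent.ind ?_
    intro y
    by_cases hy : (y : V₂) = f2
    · left; simp only [psi2', compLift_mk, dif_pos hy]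
    · right
      refine ⟨_, by simp only [psi2', compLift_mk, dif_neg hy]; rfl, ?_⟩
      simp only [chi, mkA, compLift_mk]
      rfl
  -- intersection
  have hint : ∀ b c, psi1' Γ1 Γ2 hl1 ha1 hv b = psi2' Γ1 Γ2 hl2 ha2 hv c →
      psi1' Γ1 Γ2 hl1 ha1 hv b = psi1' Γ1 Γ2 hl1 ha1 hv (mkB1 Γ1 S f1 hf1) := by
    intro b c hbc
    rw [h0']
    rcases h1 b with hb | ⟨a, ha, hca⟩
    · exact hb
    · exfalso
      rcases h2 c with hc | ⟨a', ha', hca'⟩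
      · rw [hbc, hc] at ha; exact Option.some_ne_none _ ha.symm
      · have : a = a' := by
          rw [ha, ha'] at hbc
          exact Option.some.inj hbc
        rw [this, hca'] at hca
        exact Bool.noConfusion hca
  have key := card_union_lemma _ _ hinj1 hinj2 hcov
    (mkB1 Γ1 S f1 hf1) (mkB2 Γ2 v1 S f2 hf2) h0 hint
  have hopt : Nat.card (Option ((glueGraph Γ1 Γ2 f1 v1 f2 v2).induce
      ((↑S : Set (GlueV f1 f2 v2))ᶜ)).ConnectedComponent) =
      Nat.card ((glueGraph Γ1 Γ2 f1 v1 f2 v2).induce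
      ((↑S : Set (GlueV f1 f2 v2))ᶜ)).ConnectedComponent + 1 := by
    have := Fintype.ofFinite ((glueGraph Γ1 Γ2 f1 v1 f2 v2).induce
      ((↑S : Set (GlueV f1 f2 v2))ᶜ)).ConnectedComponent
    simp [Nat.card_eq_fintype_card]
  omega

end Case2Count
theorem stmt13 {V₁ V₂ : Type*} [Fintype V₁] [DecidableEq V₁] [Fintype V₂] [DecidableEq V₂]
    (Γ1 : SimpleGraph V₁) (Γ2 : SimpleGraph V₂)
    [DecidableRel Γ1.Adj] [DecidableRel Γ2.Adj]
    (hconn1 : Γ1.Connected) (hconn2 : Γ2.Connected)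
    (f1 v1 : V₁) (f2 v2 : V₂)
    (hl1 : Γ1.degree f1 = 1) (hl2 : Γ2.degree f2 = 1)
    (ha1 : Γ1.Adj f1 v1) (ha2 : Γ2.Adj f2 v2)
    (hd1 : 3 ≤ Γ1.degree v1) (hd2 : 3 ≤ Γ2.degree v2)
    (hne1 : v1 ≠ f1) (hne2 : v2 ≠ f2) :
    ∀ S : Finset (GlueV f1 f2 v2),
      ((Sum.inl ⟨v1, hne1⟩ : GlueV f1 f2 v2) ∉ S →
        numComp (glueGraph Γ1 Γ2 f1 v1 f2 v2) S =
          numComp Γ1 (leftPart S) + numComp Γ2 (rightPart v1 S) - 1) ∧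
      ((Sum.inl ⟨v1, hne1⟩ : GlueV f1 f2 v2) ∈ S →
        numComp (glueGraph Γ1 Γ2 f1 v1 f2 v2) S =
          numComp Γ1 (leftPart S) + numComp Γ2 (rightPart v1 S) - 2) := by
  intro S
  constructor
  · intro hv
    have key := case1_count Γ1 Γ2 hl1 ha1 hl2 ha2 (hne1 := hne1) (S := S) hv
    simp only [numComp]
    omega
  · intro hv
    have key := case2_count Γ1 Γ2 hl1 ha1 hl2 ha2 hne2 (hne1 := hne1) (S := S) hv
    simp only [numComp]
    omega
end
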